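/- arXiv:2105.06710 — 2 statements merged into one kernel-verified Lean document; each statement's English description precedes it below -/
import Mathlib

section
/- For any hypergraph H, any α ∈ [0,1], and any distinct vertices x, y, the (α,h)-Ollivier–Ricci curvature satisfies κ̃(α,h;x,y) ≥ −2h'(0)(1−α) / W_h(δ_x, δ_y). -/
open Filter Set Classical

noncomputable section

/-- A hypergraph: a vertex type together with a family of hyperedges. -/
structure HGraph (V : Type*) where
  E : Set (Set V)

namespace HGraph

variable {V : Type*}

/-- Two distinct vertices are adjacent if some hyperedge contains both. -/
def Adj (H : HGraph V) (x y : V) : Prop :=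
  x ≠ y ∧ ∃ e ∈ H.E, x ∈ e ∧ y ∈ e

/-- There is a path of length `n` from `x` to `y` (each consecutive pair lies
in a common hyperedge). -/
def IsPath (H : HGraph V) (x y : V) (n : ℕ) : Prop :=
  ∃ f : ℕ → V, f 0 = x ∧ f n = y ∧ ∀ i < n, ∃ e ∈ H.E, f i ∈ e ∧ f (i + 1) ∈ e

/-- The graph distance on a hypergraph: the shortest length of a path. -/
def dist (H : HGraph V) (x y : V) : ℕ :=
  sInf {n | H.IsPath x y n}

def Connected (H : HGraph V) : Prop := ∀ x y : V, ∃ n, H.IsPath x y n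

def LocallyFinite (H : HGraph V) : Prop := ∀ x : V, {y | H.Adj x y}.Finite

/-- A hypergraph is simple if no hyperedge is contained in a different one. -/
def Simple (H : HGraph V) : Prop :=
  ∀ e₁ ∈ H.E, ∀ e₂ ∈ H.E, e₁ ≠ e₂ → ¬e₁ ⊆ e₂

/-- The degree of a vertex: the number of its neighbours. -/
def degree (H : HGraph V) (x : V) : ℕ := {y | H.Adj x y}.ncard

end HGraph

/-- A finitely supported probability function on `V`. -/
def IsProb {V : Type*} (μ : V → ℝ) : Prop :=
  (∀ v, 0 ≤ μ v) ∧ (Function.support μ).Finite ∧ ∑' v, μ v = 1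

/-- A coupling of two probability functions. -/
def IsCoupling {V : Type*} (π : V → V → ℝ) (μ ν : V → ℝ) : Prop :=
  (∀ x y, 0 ≤ π x y) ∧ (∀ x, ∑' y, π x y = μ x) ∧ (∀ y, ∑' x, π x y = ν y)

/-- The L¹-Wasserstein distance with respect to the graph distance of `H`. -/
def W1 {V : Type*} (H : HGraph V) (μ ν : V → ℝ) : ℝ :=
  sInf {c | ∃ π, IsCoupling π μ ν ∧
    c = ∑' p : V × V, (H.dist p.1 p.2 : ℝ) * π p.1 p.2}

/-- A sequence of probability measures from `μ` to `ν` each of whose increments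
is supported in a single hyperedge. -/
def WhAdmissible {V : Type*} (H : HGraph V) (μ ν : V → ℝ) (I : ℕ)
    (ξ : ℕ → V → ℝ) : Prop :=
  ξ 0 = μ ∧ ξ I = ν ∧ (∀ i ≤ I, IsProb (ξ i)) ∧
    ∀ i < I, ∃ e ∈ H.E, Function.support (fun v => ξ (i + 1) v - ξ i v) ⊆ e

/-- The new transport distance `W_h`. -/
def Wh {V : Type*} (H : HGraph V) (h : ℝ → ℝ) (μ ν : V → ℝ) : ℝ :=
  sInf {c | ∃ I ξ, WhAdmissible H μ ν I ξ ∧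
    c = ∑ i ∈ Finset.range I, h (W1 H (ξ i) (ξ (i + 1)))}

/-- Assumptions on the concave cost function `h`, with one-sided derivatives
`D0 = h'(0)` and `D1 = h'(1)`. -/
structure CostFn (h : ℝ → ℝ) (D0 D1 : ℝ) : Prop where
  nonneg : ∀ x ∈ Set.Icc (0 : ℝ) 1, 0 ≤ h x
  mono : MonotoneOn h (Set.Icc (0 : ℝ) 1)
  cont : ContinuousOn h (Set.Icc (0 : ℝ) 1)
  concave : ConcaveOn ℝ (Set.Icc (0 : ℝ) 1) h
  zero : h 0 = 0
  d0_pos : 0 < D0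
  d0 : Filter.Tendsto (fun t => h t / t) (nhdsWithin 0 (Set.Ioi 0)) (nhds D0)
  d1 : Filter.Tendsto (fun t => (h 1 - h t) / (1 - t))
    (nhdsWithin 1 (Set.Iio 1)) (nhds D1)

/-- The Dirac measure at a point, as a probability function. -/
def dirac {V : Type*} (x : V) : V → ℝ := fun v => if v = x then 1 else 0

/-- The `α`-lazy uniform random walk at `x`. -/
def rw {V : Type*} (H : HGraph V) (α : ℝ) (x : V) : V → ℝ :=
  fun v => if v = x then α else if H.Adj x v then (1 - α) / (H.degree x) else 0

/-- The `(α,h)`-Ollivier–Ricci curvature. -/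
def ORic {V : Type*} (H : HGraph V) (h : ℝ → ℝ) (α : ℝ) (x y : V) : ℝ :=
  1 - Wh H h (rw H α x) (rw H α y) / Wh H h (dirac x) (dirac y)

/-- The `h`-LLY–Ricci curvature. -/
def hLLY {V : Type*} (H : HGraph V) (h : ℝ → ℝ) (x y : V) : ℝ :=
  Filter.liminf (fun α => ORic H h α x y / (1 - α)) (nhdsWithin 1 (Set.Iio 1))

end

noncomputable section ORicAux

open Finset in
section

variable {V : Type*}

lemma dist_self' (H : HGraph V) (x : V) : H.dist x x = 0 := by
  have hp : H.IsPath x x 0 := ⟨fun _ => x, rfl, rfl, by omega⟩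
  exact Nat.sInf_eq_zero.mpr (Or.inl hp)

lemma dist_le_one' (H : HGraph V) {x y : V} {e : Set V}
    (he : e ∈ H.E) (hx : x ∈ e) (hy : y ∈ e) : H.dist x y ≤ 1 := by
  apply Nat.sInf_le
  refine ⟨fun n => if n = 0 then x else y, by simp, by simp, ?_⟩
  intro i hi
  have : i = 0 := by omega
  subst this
  exact ⟨e, he, by simpa using hx, by simpa using hy⟩

lemma isPath_symm' (H : HGraph V) {x y : V} {n : ℕ} (hp : H.IsPath x y n) :
    H.IsPath y x n := by
  obtain ⟨f, h0, hn, hstep⟩ := hp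
  refine ⟨fun i => f (n - i), by simp [hn], by simp [h0], ?_⟩
  intro i hi
  obtain ⟨e, he, h1, h2⟩ := hstep (n - i - 1) (by omega)
  refine ⟨e, he, ?_, ?_⟩
  · show f (n - i) ∈ e
    have h3 : n - i = (n - i - 1) + 1 := by omega
    rw [h3]; exact h2
  · show f (n - (i + 1)) ∈ e
    have h3 : n - (i + 1) = n - i - 1 := by omega
    rw [h3]; exact h1

lemma dist_symm' (H : HGraph V) (x y : V) : H.dist x y = H.dist y x := by
  unfold HGraph.dist
  congr 1
  ext n
  exact ⟨fun hp => isPath_symm' H hp, fun hp => isPath_symm' H hp⟩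

lemma W1_mem_nonneg (H : HGraph V) {μ ν : V → ℝ} {c : ℝ}
    (hc : c ∈ {c | ∃ π, IsCoupling π μ ν ∧
      c = ∑' p : V × V, (H.dist p.1 p.2 : ℝ) * π p.1 p.2}) : 0 ≤ c := by
  obtain ⟨π, hπ, rfl⟩ := hc
  exact tsum_nonneg fun p => mul_nonneg (Nat.cast_nonneg _) (hπ.1 _ _)

lemma W1_bddBelow (H : HGraph V) (μ ν : V → ℝ) :
    BddBelow {c | ∃ π, IsCoupling π μ ν ∧
      c = ∑' p : V × V, (H.dist p.1 p.2 : ℝ) * π p.1 p.2} :=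
  ⟨0, fun _ hc => W1_mem_nonneg H hc⟩

lemma W1_nonneg (H : HGraph V) (μ ν : V → ℝ) : 0 ≤ W1 H μ ν :=
  Real.sInf_nonneg (fun _ hc => W1_mem_nonneg H hc)

lemma W1_symm (H : HGraph V) (μ ν : V → ℝ) : W1 H μ ν = W1 H ν μ := by
  have key : ∀ π : V → V → ℝ,
      ∑' p : V × V, (H.dist p.1 p.2 : ℝ) * π p.2 p.1
        = ∑' p : V × V, (H.dist p.1 p.2 : ℝ) * π p.1 p.2 := by
    intro π
    calc ∑' p : V × V, (H.dist p.1 p.2 : ℝ) * π p.2 p.1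
        = ∑' p : V × V, (H.dist p.2 p.1 : ℝ) * π p.2 p.1 :=
          tsum_congr (fun p => by rw [dist_symm'])
      _ = ∑' p : V × V, (H.dist p.1 p.2 : ℝ) * π p.1 p.2 :=
          (Equiv.prodComm V V).tsum_eq (fun q : V × V => (H.dist q.1 q.2 : ℝ) * π q.1 q.2)
  unfold W1
  congr 1
  ext c
  constructor
  · rintro ⟨π, ⟨hpos, hrow, hcol⟩, rfl⟩
    exact ⟨fun u v => π v u, ⟨fun u v => hpos v u, hcol, hrow⟩, (key π).symm⟩
  · rintro ⟨π, ⟨hpos, hrow, hcol⟩, rfl⟩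
    exact ⟨fun u v => π v u, ⟨fun u v => hpos v u, hcol, hrow⟩,
      by rw [key (fun u v => π v u)]⟩

lemma isProb_dirac (x : V) : IsProb (dirac x) := by
  refine ⟨fun v => by by_cases hv : v = x <;> simp [dirac, hv], ?_, ?_⟩
  · exact Set.Finite.subset (Set.finite_singleton x)
      (fun v hv => by
        by_cases h : v = x
        · simp [h]
        · exact absurd (by simpa [dirac, h] using hv) (fun hh : (0:ℝ) ≠ 0 => hh rfl))
  · rw [tsum_eq_single x (fun v hv => by simp [dirac, hv])]
    simp [dirac]

lemma exists_adj (H : HGraph V) (hconn : H.Connected) {x y : V} (hxy : x ≠ y) :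
    ∃ z, H.Adj x z := by
  obtain ⟨n, f, h0, hn, hstep⟩ := hconn x y
  by_contra hno
  push_neg at hno
  have hall : ∀ i ≤ n, f i = x := by
    intro i hi
    induction i with
    | zero => exact h0
    | succ k ih =>
      have hk : f k = x := ih (by omega)
      by_contra hne
      obtain ⟨e, he, h1, h2⟩ := hstep k (by omega)
      exact (hno (f (k + 1))) ⟨fun hh => hne hh.symm, e, he, hk ▸ h1, h2⟩
  exact hxy ((hall n le_rfl).symm.trans hn)

end
end ORicAux
noncomputable section ORicAux2

variable {V : Type*}

lemma W1_single_move (H : HGraph V) {μ : V → ℝ} (hμ0 : ∀ v, 0 ≤ μ v)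
    {u v : V} (huv : u ≠ v) {m : ℝ} (hm : 0 ≤ m) (hum : m ≤ μ u) :
    W1 H μ (fun w => μ w - (if w = u then m else 0) + (if w = v then m else 0))
      ≤ (H.dist u v : ℝ) * m := by
  classical
  set ν : V → ℝ := fun w => μ w - (if w = u then m else 0) + (if w = v then m else 0)
    with hν
  set π : V → V → ℝ := fun w w' =>
    if w = u then (if w' = u then μ u - m else if w' = v then m else 0)
    else if w' = w then μ w else 0 with hπ
  have hcoup : IsCoupling π μ ν := by
    refine ⟨?_, ?_, ?_⟩
    · intro w w'
      simp only [hπ]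
      by_cases h1 : w = u
      · simp only [if_pos h1]
        by_cases h2 : w' = u
        · simp only [if_pos h2]; linarith
        · simp only [if_neg h2]
          by_cases h3 : w' = v
          · simp [h3, hm]
          · simp [h3]
      · simp only [if_neg h1]
        by_cases h2 : w' = w
        · simp [h2, hμ0 w]
        · simp [h2]
    · intro w
      have euu : π u u = μ u - m := by simp [hπ]
      have euv : π u v = m := by simp [hπ, Ne.symm huv]
      by_cases h1 : w = u
      · rw [h1]
        rw [tsum_eq_sum (s := {u, v}) ?_]
        · rw [Finset.sum_pair huv, euu, euv]; ring
        · intro w' hw'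
          simp only [Finset.mem_insert, Finset.mem_singleton, not_or] at hw'
          simp [hπ, hw'.1, hw'.2]
      · rw [tsum_eq_single w ?_]
        · simp [hπ, h1]
        · intro w' hw'
          simp [hπ, h1, hw']
    · intro w'
      have euu : π u u = μ u - m := by simp [hπ]
      have euv : π u v = m := by simp [hπ, Ne.symm huv]
      have hνu : ν u = μ u - m := by simp [hν, huv]
      have hνv : ν v = μ v + m := by simp [hν, Ne.symm huv]
      by_cases h1 : w' = u
      · rw [h1]
        rw [tsum_eq_single u ?_]
        · rw [euu, hνu]
        · intro w hw
          have h2 : ¬(u = w) := fun hh => hw hh.symm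
          simp [hπ, hw, h2]
      · by_cases h2 : w' = v
        · rw [h2]
          rw [tsum_eq_sum (s := {u, v}) ?_]
          · have evv : π v v = μ v := by simp [hπ, Ne.symm huv]
            rw [Finset.sum_pair huv, euv, evv, hνv]; ring
          · intro w hw
            simp only [Finset.mem_insert, Finset.mem_singleton, not_or] at hw
            have h3 : ¬(v = w) := fun hh => hw.2 hh.symm
            simp [hπ, hw.1, h3]
        · rw [tsum_eq_single w' ?_]
          · simp [hπ, hν, h1, h2]
          · intro w hw
            by_cases h3 : w = u
            · simp [hπ, h3, h1, h2]
            · have h4 : ¬(w' = w) := fun hh => hw hh.symm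
              simp [hπ, h3, h4]
  have hcost : (∑' p : V × V, (H.dist p.1 p.2 : ℝ) * π p.1 p.2)
      = (H.dist u v : ℝ) * m := by
    rw [tsum_eq_single (u, v) ?_]
    · simp [hπ, Ne.symm huv]
    · intro p hp
      by_cases h1 : p.1 = p.2
      · rw [h1, dist_self']; simp
      · by_cases h2 : p.1 = u
        · have h3 : p.2 ≠ u := fun hh => h1 (h2.trans hh.symm)
          have h4 : p.2 ≠ v := fun hh => hp (Prod.ext h2 hh)
          simp [hπ, h2, h3, h4]
        · have h3 : ¬(p.2 = p.1) := fun hh => h1 hh.symm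
          simp [hπ, h2, h3]
  have hmem : ((H.dist u v : ℝ) * m) ∈ {c | ∃ π', IsCoupling π' μ ν ∧
      c = ∑' p : V × V, (H.dist p.1 p.2 : ℝ) * π' p.1 p.2} :=
    ⟨π, hcoup, hcost.symm⟩
  exact csInf_le (W1_bddBelow H μ ν) hmem

end ORicAux2
noncomputable section ORicAux3

variable {V : Type*}

lemma W1_le_one (H : HGraph V) {μ ν : V → ℝ} (hμ : IsProb μ) (hν : IsProb ν)
    {e : Set V} (he : e ∈ H.E)
    (hsupp : Function.support (fun v => ν v - μ v) ⊆ e) :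
    W1 H μ ν ≤ 1 := by
  classical
  obtain ⟨hμ0, hμfin, hμsum⟩ := hμ
  obtain ⟨hν0, hνfin, hνsum⟩ := hν
  set s : Finset V := hμfin.toFinset ∪ hνfin.toFinset with hs
  have hμs : ∀ v ∉ s, μ v = 0 := by
    intro v hv
    by_contra hh
    exact hv (Finset.mem_union_left _ (hμfin.mem_toFinset.mpr hh))
  have hνs : ∀ v ∉ s, ν v = 0 := by
    intro v hv
    by_contra hh
    exact hv (Finset.mem_union_right _ (hνfin.mem_toFinset.mpr hh))
  have hμsum' : ∑ v ∈ s, μ v = 1 := by rw [← hμsum, tsum_eq_sum hμs]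
  have hνsum' : ∑ v ∈ s, ν v = 1 := by rw [← hνsum, tsum_eq_sum hνs]
  set a : V → ℝ := fun v => max (μ v - ν v) 0 with ha
  set b : V → ℝ := fun v => max (ν v - μ v) 0 with hb
  have ha0 : ∀ v, 0 ≤ a v := fun v => le_max_right _ _
  have hb0 : ∀ v, 0 ≤ b v := fun v => le_max_right _ _
  have hmina : ∀ v, min (μ v) (ν v) + a v = μ v := by
    intro v
    rcases le_total (μ v) (ν v) with hle | hle
    · rw [min_eq_left hle, ha]; simp [max_eq_right (by linarith : μ v - ν v ≤ 0)]
    · rw [min_eq_right hle, ha]; simp [max_eq_left (by linarith : 0 ≤ μ v - ν v)]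
  have hminb : ∀ v, min (μ v) (ν v) + b v = ν v := by
    intro v
    rcases le_total (μ v) (ν v) with hle | hle
    · rw [min_eq_left hle, hb]; simp [max_eq_left (by linarith : 0 ≤ ν v - μ v)]
    · rw [min_eq_right hle, hb]; simp [max_eq_right (by linarith : ν v - μ v ≤ 0)]
  have ha_s : ∀ v ∉ s, a v = 0 := by
    intro v hv; rw [ha]; simp [hμs v hv, hνs v hv]
  have hb_s : ∀ v ∉ s, b v = 0 := by
    intro v hv; rw [hb]; simp [hμs v hv, hνs v hv]
  have ha_e : ∀ v, a v ≠ 0 → v ∈ e := by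
    intro v hv
    apply hsupp
    simp only [Function.mem_support]
    intro hh
    apply hv
    rw [ha]
    simp [max_eq_right (by linarith : μ v - ν v ≤ 0)]
  have hb_e : ∀ v, b v ≠ 0 → v ∈ e := by
    intro v hv
    apply hsupp
    simp only [Function.mem_support]
    intro hh
    apply hv
    rw [hb]
    simp [max_eq_right (by linarith : ν v - μ v ≤ 0)]
  set M : ℝ := ∑ v ∈ s, a v with hM
  have hbM : ∑ v ∈ s, b v = M := by
    have hdiff : ∑ v ∈ s, (a v - b v) = 0 := by
      have : ∀ v ∈ s, a v - b v = μ v - ν v := by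
        intro v _
        rcases le_total (μ v) (ν v) with hle | hle
        · have h1 : a v = 0 := by
            rw [ha]; simp only []; rw [max_eq_right (by linarith : μ v - ν v ≤ 0)]
          have h2 : b v = ν v - μ v := by
            rw [hb]; simp only []; rw [max_eq_left (by linarith : 0 ≤ ν v - μ v)]
          rw [h1, h2]; ring
        · have h1 : a v = μ v - ν v := by
            rw [ha]; simp only []; rw [max_eq_left (by linarith : 0 ≤ μ v - ν v)]
          have h2 : b v = 0 := by
            rw [hb]; simp only []; rw [max_eq_right (by linarith : ν v - μ v ≤ 0)]
          rw [h1, h2]; ring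
      rw [Finset.sum_congr rfl this, Finset.sum_sub_distrib, hμsum', hνsum']
      ring
    rw [Finset.sum_sub_distrib] at hdiff
    rw [hM]
    linarith
  have hM0 : 0 ≤ M := Finset.sum_nonneg (fun v _ => ha0 v)
  have hM1 : M ≤ 1 := by
    rw [hM, ← hμsum']
    apply Finset.sum_le_sum
    intro v _
    rw [ha]
    exact max_le (by linarith [hν0 v]) (hμ0 v)
  rcases hM0.eq_or_lt with hMz | hMpos
  · -- M = 0 : μ = ν, use diagonal coupling
    have hae : ∀ v, a v = 0 := by
      intro v
      by_cases hvs : v ∈ s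
      · exact (Finset.sum_eq_zero_iff_of_nonneg (fun v _ => ha0 v)).mp hMz.symm v hvs
      · exact ha_s v hvs
    have hbe : ∀ v, b v = 0 := by
      intro v
      by_cases hvs : v ∈ s
      · refine (Finset.sum_eq_zero_iff_of_nonneg (fun v _ => hb0 v)).mp ?_ v hvs
        rw [hbM]; exact hMz.symm
      · exact hb_s v hvs
    have hμν : ∀ v, μ v = ν v := by
      intro v
      have h1 := hmina v
      have h2 := hminb v
      rw [hae v] at h1
      rw [hbe v] at h2
      linarith
    set π : V → V → ℝ := fun u v => if v = u then μ u else 0 with hπ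
    have hcoup : IsCoupling π μ ν := by
      refine ⟨fun u v => ?_, fun u => ?_, fun v => ?_⟩
      · by_cases hh : v = u <;> simp [hπ, hh, hμ0 u]
      · rw [tsum_eq_single u (fun w hw => by simp [hπ, hw])]
        simp [hπ]
      · rw [tsum_eq_single v (fun w hw => by
          have h1 : ¬(v = w) := fun hh => hw hh.symm
          simp [hπ, h1])]
        simp [hπ, hμν v]
    have hzero : (fun p : V × V => (H.dist p.1 p.2 : ℝ) * π p.1 p.2) = fun _ => 0 := by
      funext p
      by_cases hh : p.2 = p.1
      · rw [hh, dist_self']; simp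
      · simp [hπ, hh]
    have hmem : (∑' p : V × V, (H.dist p.1 p.2 : ℝ) * π p.1 p.2) ∈
        {c | ∃ π', IsCoupling π' μ ν ∧
          c = ∑' p : V × V, (H.dist p.1 p.2 : ℝ) * π' p.1 p.2} := ⟨π, hcoup, rfl⟩
    have hW := csInf_le (W1_bddBelow H μ ν) hmem
    rw [hzero, tsum_zero] at hW
    exact le_trans hW zero_le_one
  · -- M > 0
    have hMne : M ≠ 0 := ne_of_gt hMpos
    set π : V → V → ℝ := fun u v =>
      (if v = u then min (μ u) (ν u) else 0) + a u * b v / M with hπ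
    have hπ0 : ∀ u v, 0 ≤ π u v := by
      intro u v
      apply add_nonneg
      · by_cases hh : v = u
        · simp [hh, le_min (hμ0 u) (hν0 u)]
        · simp [hh]
      · exact div_nonneg (mul_nonneg (ha0 u) (hb0 v)) hM0
    have hπ_out : ∀ p : V × V, p ∉ s ×ˢ s → π p.1 p.2 = 0 := by
      rintro ⟨u, v⟩ hp
      rw [Finset.mem_product, not_and_or] at hp
      rcases hp with hu | hv
      · have haz : a u = 0 := ha_s u hu
        have hmz : min (μ u) (ν u) = 0 := by rw [hμs u hu, hνs u hu]; simp
        simp [hπ, haz, hmz]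
      · have hbz : b v = 0 := hb_s v hv
        by_cases hh : v = u
        · have hus : u ∉ s := hh ▸ hv
          have hmz : min (μ u) (ν u) = 0 := by rw [hμs u hus, hνs u hus]; simp
          have hbz' : b u = 0 := hh ▸ hbz
          simp [hπ, hh, hmz, hbz']
        · simp [hπ, hbz, hh]
    have hrow : ∀ u, ∑' v, π u v = μ u := by
      intro u
      have hvan : ∀ v ∉ insert u s, π u v = 0 := by
        intro v hv
        simp only [Finset.mem_insert, not_or] at hv
        simp [hπ, hv.1, hb_s v hv.2]
      rw [tsum_eq_sum hvan]
      simp only [hπ]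
      rw [Finset.sum_add_distrib]
      have e1 : ∑ v ∈ insert u s, (if v = u then min (μ u) (ν u) else 0)
          = min (μ u) (ν u) := by
        rw [Finset.sum_ite_eq' (insert u s) u (fun _ => min (μ u) (ν u))]
        simp
      have e2 : ∑ v ∈ insert u s, a u * b v / M = a u := by
        have : ∀ v, a u * b v / M = (a u / M) * b v := by intro v; ring
        rw [Finset.sum_congr rfl (fun v _ => this v), ← Finset.mul_sum]
        rw [Finset.sum_insert_of_eq_zero_if_notMem (fun hu => hb_s u hu), hbM]
        field_simp
      rw [e1, e2, hmina u]
    have hcol : ∀ v, ∑' u, π u v = ν v := by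
      intro v
      have hvan : ∀ u ∉ insert v s, π u v = 0 := by
        intro u hu
        simp only [Finset.mem_insert, not_or] at hu
        have h1 : ¬(v = u) := fun hh => hu.1 hh.symm
        simp [hπ, h1, ha_s u hu.2]
      rw [tsum_eq_sum hvan]
      simp only [hπ]
      rw [Finset.sum_add_distrib]
      have e1 : ∑ u ∈ insert v s, (if v = u then min (μ u) (ν u) else 0)
          = min (μ v) (ν v) := by
        rw [Finset.sum_congr rfl
          (fun u _ => show (if v = u then min (μ u) (ν u) else 0)
              = (if u = v then min (μ v) (ν v) else 0) by
            by_cases hh : u = v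
            · subst hh; simp
            · rw [if_neg hh, if_neg (fun hhh => hh hhh.symm)])]
        rw [Finset.sum_ite_eq' (insert v s) v (fun _ => min (μ v) (ν v))]
        simp
      have e2 : ∑ u ∈ insert v s, a u * b v / M = b v := by
        have : ∀ u, a u * b v / M = (b v / M) * a u := by intro u; ring
        rw [Finset.sum_congr rfl (fun u _ => this u), ← Finset.mul_sum]
        rw [Finset.sum_insert_of_eq_zero_if_notMem (fun hv => ha_s v hv), ← hM]
        field_simp
      rw [e1, e2, hminb v]
    set f : V × V → ℝ := fun p => (H.dist p.1 p.2 : ℝ) * π p.1 p.2 with hf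
    set g : V × V → ℝ := fun p => a p.1 * b p.2 / M with hg
    have hf_out : ∀ p ∉ s ×ˢ s, f p = 0 := by
      intro p hp
      rw [hf]
      simp [hπ_out p hp]
    have hg_out : ∀ p ∉ s ×ˢ s, g p = 0 := by
      rintro ⟨u, v⟩ hp
      rw [Finset.mem_product, not_and_or] at hp
      rcases hp with hu | hv
      · simp [hg, ha_s u hu]
      · simp [hg, hb_s v hv]
    have hfsum : Summable f := summable_of_ne_finset_zero hf_out
    have hgsum : Summable g := summable_of_ne_finset_zero hg_out
    have hfg : ∀ p, f p ≤ g p := by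
      rintro ⟨u, v⟩
      by_cases hh : v = u
      · have hfz : f (u, v) = 0 := by
          rw [hf]; simp only [hh]; rw [dist_self']; simp
        have hgz : 0 ≤ g (u, v) := by
          rw [hg]
          exact div_nonneg (mul_nonneg (ha0 u) (hb0 v)) hM0
        rw [hfz]; exact hgz
      · have hπuv : π u v = a u * b v / M := by simp [hπ, hh]
        rw [hf, hg]
        simp only [hπuv]
        by_cases hab : a u * b v = 0
        · simp [hab]
        · have hau : a u ≠ 0 := fun hz => hab (by rw [hz]; ring)
          have hbv : b v ≠ 0 := fun hz => hab (by rw [hz]; ring)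
          have hd1 : (H.dist u v : ℝ) ≤ 1 := by
            have := dist_le_one' H he (ha_e u hau) (hb_e v hbv)
            exact_mod_cast this
          calc (H.dist u v : ℝ) * (a u * b v / M) ≤ 1 * (a u * b v / M) := by
                apply mul_le_mul_of_nonneg_right hd1
                exact div_nonneg (mul_nonneg (ha0 u) (hb0 v)) hM0
            _ = a u * b v / M := one_mul _
    have hgval : ∑' p, g p = M := by
      rw [tsum_eq_sum hg_out, Finset.sum_product]
      have : ∀ u ∈ s, ∑ v ∈ s, g (u, v) = a u := by
        intro u _
        have : ∀ v, g (u, v) = (a u / M) * b v := by intro v; simp [hg]; ring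
        rw [Finset.sum_congr rfl (fun v _ => this v), ← Finset.mul_sum, hbM]
        field_simp
      rw [Finset.sum_congr rfl this]
    have hmem : (∑' p : V × V, (H.dist p.1 p.2 : ℝ) * π p.1 p.2) ∈
        {c | ∃ π', IsCoupling π' μ ν ∧
          c = ∑' p : V × V, (H.dist p.1 p.2 : ℝ) * π' p.1 p.2} :=
      ⟨π, ⟨hπ0, hrow, hcol⟩, rfl⟩
    have hW := csInf_le (W1_bddBelow H μ ν) hmem
    have hle : (∑' p : V × V, (H.dist p.1 p.2 : ℝ) * π p.1 p.2) ≤ M := by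
      calc (∑' p : V × V, (H.dist p.1 p.2 : ℝ) * π p.1 p.2)
          = ∑' p, f p := by rw [hf]
        _ ≤ ∑' p, g p := Summable.tsum_le_tsum hfg hfsum hgsum
        _ = M := hgval
    exact le_trans hW (le_trans hle hM1)

end ORicAux3
noncomputable section ORicAux4

variable {V : Type*}

def WhS (H : HGraph V) (h : ℝ → ℝ) (μ ν : V → ℝ) : Set ℝ :=
  {c | ∃ I ξ, WhAdmissible H μ ν I ξ ∧
    c = ∑ i ∈ Finset.range I, h (W1 H (ξ i) (ξ (i + 1)))}

lemma Wh_eq (H : HGraph V) (h : ℝ → ℝ) (μ ν : V → ℝ) :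
    Wh H h μ ν = sInf (WhS H h μ ν) := rfl

lemma WhS_mem_nonneg {H : HGraph V} {h : ℝ → ℝ} {D0 D1 : ℝ}
    (hc : CostFn h D0 D1) {μ ν : V → ℝ} {c : ℝ} (hcc : c ∈ WhS H h μ ν) : 0 ≤ c := by
  obtain ⟨I, ξ, ⟨h0, hI, hprob, hstep⟩, rfl⟩ := hcc
  apply Finset.sum_nonneg
  intro i hi
  rw [Finset.mem_range] at hi
  obtain ⟨e, he, hsupp⟩ := hstep i hi
  exact hc.nonneg _ ⟨W1_nonneg H _ _,
    W1_le_one H (hprob i hi.le) (hprob (i + 1) hi) he hsupp⟩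

lemma Wh_bddBelow {H : HGraph V} {h : ℝ → ℝ} {D0 D1 : ℝ}
    (hc : CostFn h D0 D1) (μ ν : V → ℝ) : BddBelow (WhS H h μ ν) :=
  ⟨0, fun _ hcc => WhS_mem_nonneg hc hcc⟩

lemma Wh_nonneg {H : HGraph V} {h : ℝ → ℝ} {D0 D1 : ℝ}
    (hc : CostFn h D0 D1) (μ ν : V → ℝ) : 0 ≤ Wh H h μ ν :=
  Real.sInf_nonneg (fun _ hcc => WhS_mem_nonneg hc hcc)

lemma WhS_symm {H : HGraph V} {h : ℝ → ℝ} {μ ν : V → ℝ} {c : ℝ}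
    (hcc : c ∈ WhS H h μ ν) : c ∈ WhS H h ν μ := by
  obtain ⟨I, ξ, ⟨h0, hI, hprob, hstep⟩, rfl⟩ := hcc
  refine ⟨I, fun i => ξ (I - i), ⟨by simp [hI], by simp [h0], ?_, ?_⟩, ?_⟩
  · intro i _
    exact hprob _ (by omega)
  · intro i hi
    obtain ⟨e, he, hsupp⟩ := hstep (I - i - 1) (by omega)
    refine ⟨e, he, ?_⟩
    intro v hv
    apply hsupp
    simp only [Function.mem_support] at hv ⊢
    have e1 : I - (i + 1) = I - i - 1 := by omega
    have e2 : I - i = I - i - 1 + 1 := by omega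
    rw [e2, e1] at hv
    intro hzero
    apply hv
    linarith
  · rw [← Finset.sum_range_reflect]
    apply Finset.sum_congr rfl
    intro i hi
    rw [Finset.mem_range] at hi
    have e1 : I - (i + 1) = I - 1 - i := by omega
    have e2 : I - i = I - 1 - i + 1 := by omega
    show h (W1 H (ξ (I - 1 - i)) (ξ (I - 1 - i + 1)))
        = h (W1 H (ξ (I - i)) (ξ (I - (i + 1))))
    rw [e1, e2, W1_symm]

lemma WhS_add {H : HGraph V} {h : ℝ → ℝ} {μ ν ρ : V → ℝ} {cab cbc : ℝ}
    (hab : cab ∈ WhS H h μ ν) (hbc : cbc ∈ WhS H h ν ρ) :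
    cab + cbc ∈ WhS H h μ ρ := by
  obtain ⟨I, ξ, ⟨hξ0, hξI, hξp, hξs⟩, rfl⟩ := hab
  obtain ⟨J, η, ⟨hη0, hηJ, hηp, hηs⟩, rfl⟩ := hbc
  refine ⟨I + J, fun i => if i ≤ I then ξ i else η (i - I), ⟨?_, ?_, ?_, ?_⟩, ?_⟩
  case _ =>
    simp [hξ0]
  all_goals
    have hlow : ∀ i, i ≤ I → (fun i => if i ≤ I then ξ i else η (i - I)) i = ξ i :=
      fun i hi => if_pos hi
  all_goals
    have hmid : ∀ i, I ≤ i → (fun i => if i ≤ I then ξ i else η (i - I)) i = η (i - I) := by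
      intro i hI'
      by_cases hh : i ≤ I
      · have : i = I := le_antisymm hh hI'
        subst this
        simp [hξI, ← hη0]
      · simp [hh]
  · rw [hmid (I + J) (Nat.le_add_right _ _)]
    simpa using hηJ
  · intro i hi
    by_cases hh : i ≤ I
    · rw [hlow i hh]; exact hξp i hh
    · rw [hmid i (by omega)]; exact hηp _ (by omega)
  · intro i hi
    by_cases hh : i < I
    · obtain ⟨e, he, hs⟩ := hξs i hh
      refine ⟨e, he, ?_⟩
      rw [hlow i hh.le, hlow (i + 1) (by omega)]
      exact hs
    · obtain ⟨e, he, hs⟩ := hηs (i - I) (by omega)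
      refine ⟨e, he, ?_⟩
      rw [hmid i (by omega), hmid (i + 1) (by omega)]
      have e1 : i + 1 - I = (i - I) + 1 := by omega
      rw [e1]
      exact hs
  · rw [show Finset.range = Finset.Ico 0 from funext Finset.range_eq_Ico, ← Finset.sum_Ico_consecutive _ (Nat.zero_le I)
      (Nat.le_add_right I J)]
    congr 1
    · rw [← Finset.range_eq_Ico]
      apply Finset.sum_congr rfl
      intro i hi
      rw [Finset.mem_range] at hi
      rw [hlow i hi.le, hlow (i + 1) (by omega)]
    · symm
      rw [Finset.sum_Ico_eq_sum_range]
      have hJJ : I + J - I = J := by omega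
      rw [hJJ, ← Finset.range_eq_Ico]
      apply Finset.sum_congr rfl
      intro i hi
      rw [Finset.mem_range] at hi
      rw [hmid (I + i) (by omega), hmid (I + i + 1) (by omega)]
      have e1 : I + i - I = i := by omega
      have e2 : I + i + 1 - I = i + 1 := by omega
      rw [e1, e2]

lemma Wh_triangle {H : HGraph V} {h : ℝ → ℝ} {D0 D1 : ℝ} (hc : CostFn h D0 D1)
    {μ ν ρ : V → ℝ} (hA : (WhS H h μ ν).Nonempty) (hB : (WhS H h ν ρ).Nonempty) :
    Wh H h μ ρ ≤ Wh H h μ ν + Wh H h ν ρ := by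
  rw [Wh_eq, Wh_eq, Wh_eq]
  have h1 : ∀ a ∈ WhS H h μ ν, sInf (WhS H h μ ρ) ≤ a + sInf (WhS H h ν ρ) := by
    intro a ha
    have h2 : sInf (WhS H h μ ρ) - a ≤ sInf (WhS H h ν ρ) := by
      apply le_csInf hB
      intro b hb
      have h3 := csInf_le (Wh_bddBelow hc μ ρ) (WhS_add ha hb)
      linarith
    linarith
  have h4 : sInf (WhS H h μ ρ) - sInf (WhS H h ν ρ) ≤ sInf (WhS H h μ ν) :=
    le_csInf hA (fun a ha => by linarith [h1 a ha])
  linarith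

lemma WhS_dirac_nonempty (H : HGraph V) (h : ℝ → ℝ) (hconn : H.Connected)
    (x y : V) : (WhS H h (dirac x) (dirac y)).Nonempty := by
  obtain ⟨n, f, h0, hn, hstep⟩ := hconn x y
  refine ⟨_, n, fun i => dirac (f i),
    ⟨show dirac (f 0) = dirac x by rw [h0],
     show dirac (f n) = dirac y by rw [hn],
    fun i _ => isProb_dirac _, ?_⟩, rfl⟩
  intro i hi
  obtain ⟨e, he, h1, h2⟩ := hstep i hi
  refine ⟨e, he, ?_⟩
  intro v hv
  simp only [Function.mem_support] at hv
  by_cases hv1 : v = f (i + 1)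
  · exact hv1 ▸ h2
  · by_cases hv2 : v = f i
    · exact hv2 ▸ h1
    · exact absurd (by simp [dirac, hv1, hv2]) hv

lemma h_le_linear {h : ℝ → ℝ} {D0 D1 : ℝ} (hc : CostFn h D0 D1) {t : ℝ}
    (ht : t ∈ Set.Icc (0 : ℝ) 1) : h t ≤ D0 * t := by
  rcases eq_or_lt_of_le ht.1 with h0 | h0
  · rw [← h0, hc.zero]
    simp
  · have key : ∀ s ∈ Set.Ioc (0 : ℝ) t, h t / t ≤ h s / s := by
      intro s hs
      have hcon := hc.concave.2 (Set.left_mem_Icc.mpr zero_le_one) ht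
        (show (0:ℝ) ≤ 1 - s / t by
          have : s / t ≤ 1 := (div_le_one h0).mpr hs.2
          linarith)
        (show (0:ℝ) ≤ s / t from div_nonneg hs.1.le h0.le)
        (by ring)
      have hsmul : (1 - s / t) • (0 : ℝ) + (s / t) • t = s := by
        rw [smul_eq_mul, smul_eq_mul, mul_zero, zero_add]; exact div_mul_cancel₀ s h0.ne'
      rw [hsmul, hc.zero] at hcon
      have hcon' : (s / t) * h t ≤ h s := by
        have := hcon
        simpa using this
      rw [div_le_div_iff₀ h0 hs.1]
      have h2 : s / t * h t * t ≤ h s * t :=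
        mul_le_mul_of_nonneg_right hcon' h0.le
      calc h t * s = s / t * h t * t := by field_simp
        _ ≤ h s * t := h2
    have hev : ∀ᶠ s in nhdsWithin 0 (Set.Ioi 0), h t / t ≤ h s / s := by
      filter_upwards [Ioc_mem_nhdsGT h0] with s hs
      exact key s hs
    have := ge_of_tendsto hc.d0 hev
    exact (div_le_iff₀ h0).mp this

end ORicAux4
noncomputable section ORicAux5

variable {V : Type*}

def sprd (x : V) (s : Finset V) (m : ℝ) : V → ℝ :=
  fun v => if v = x then 1 - s.card * m else if v ∈ s then m else 0

lemma isProb_sprd (x : V) (s : Finset V) (m : ℝ) (hm : 0 ≤ m)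
    (hcard : (s.card : ℝ) * m ≤ 1) (hxs : x ∉ s) : IsProb (sprd x s m) := by
  classical
  refine ⟨?_, ?_, ?_⟩
  · intro v
    by_cases hv : v = x
    · simp only [sprd, if_pos hv]; linarith
    · by_cases hvs : v ∈ s
      · simp [sprd, hv, hvs, hm]
      · simp [sprd, hv, hvs]
  · apply Set.Finite.subset (Set.Finite.insert x s.finite_toSet)
    intro v hv
    by_cases h1 : v = x
    · simp [h1]
    · by_cases h2 : v ∈ s
      · simp [h2]
      · exact absurd (by simp [sprd, h1, h2]) hv
  · rw [tsum_eq_sum (s := insert x s) (fun v hv => by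
      simp only [Finset.mem_insert, not_or] at hv
      simp [sprd, hv.1, hv.2])]
    rw [Finset.sum_insert hxs]
    have e1 : sprd x s m x = 1 - s.card * m := by simp [sprd]
    have e2 : ∀ v ∈ s, sprd x s m v = m := by
      intro v hv
      have : v ≠ x := fun hh => hxs (hh ▸ hv)
      simp [sprd, this, hv]
    rw [e1, Finset.sum_congr rfl e2, Finset.sum_const, nsmul_eq_mul]
    ring

lemma spread_exists (H : HGraph V) (x : V) (m : ℝ) (hm : 0 ≤ m)
    (s : Finset V) : (∀ v ∈ s, H.Adj x v) → ((s.card : ℝ) * m ≤ 1) →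
    ∃ ξ : ℕ → V → ℝ, WhAdmissible H (dirac x) (sprd x s m) s.card ξ ∧
      ∀ i < s.card, 0 ≤ W1 H (ξ i) (ξ (i + 1)) ∧ W1 H (ξ i) (ξ (i + 1)) ≤ m := by
  classical
  induction s using Finset.induction_on with
  | empty =>
    intro _ _
    have hsprd : sprd x ∅ m = dirac x := by
      funext v
      by_cases hv : v = x <;> simp [sprd, dirac, hv]
    refine ⟨fun _ => dirac x, ⟨rfl, by simp [hsprd], fun i _ => isProb_dirac x, ?_⟩, ?_⟩
    · intro i hi
      simp at hi
    · intro i hi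
      simp at hi
  | @insert a s ha ih =>
    intro hadj hcard1
    have hax : x ≠ a := (hadj a (Finset.mem_insert_self a s)).1
    obtain ⟨_, e, he, hxe, hae⟩ := hadj a (Finset.mem_insert_self a s)
    have hcardins : ((insert a s).card : ℝ) = (s.card : ℝ) + 1 := by
      rw [Finset.card_insert_of_notMem ha]; push_cast; ring
    have hcard_s : (s.card : ℝ) * m ≤ 1 := by
      have : (s.card : ℝ) * m ≤ ((s.card : ℝ) + 1) * m := by nlinarith
      rw [← hcardins] at this
      linarith
    obtain ⟨ξ, ⟨hξ0, hξI, hξprob, hξstep⟩, hξW⟩ :=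
      ih (fun v hv => hadj v (Finset.mem_insert_of_mem hv)) hcard_s
    set I := s.card with hIdef
    have hxs : x ∉ s := fun hh => ((hadj x (Finset.mem_insert_of_mem hh)).1 rfl)
    have hxs' : x ∉ insert a s := by
      intro hh
      rcases Finset.mem_insert.mp hh with h1 | h1
      · exact hax h1
      · exact hxs h1
    have hstep_eq : sprd x (insert a s) m
        = fun w => sprd x s m w - (if w = x then m else 0) + (if w = a then m else 0) := by
      funext w
      by_cases hwx : w = x
      · have hwa : ¬(w = a) := fun hh => hax ((hwx.symm.trans hh))
        simp only [sprd, if_pos hwx, if_neg hwa]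
        rw [hcardins]
        ring
      · by_cases hwa : w = a
        · have hws : w ∉ s := fun hh => ha (hwa ▸ hh)
          simp only [sprd, if_neg hwx, if_pos hwa]
          rw [if_pos (Finset.mem_insert.mpr (Or.inl hwa)), if_neg hws]
          ring
        · simp only [sprd, if_neg hwx, if_neg hwa]
          have : w ∈ insert a s ↔ w ∈ s := by
            rw [Finset.mem_insert]
            exact ⟨fun hh => hh.resolve_left hwa, Or.inr⟩
          by_cases hws : w ∈ s
          · rw [if_pos (this.mpr hws), if_pos hws]; ring
          · rw [if_neg (fun hh => hws (this.mp hh)), if_neg hws]; ring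
    have hsprdx : sprd x s m x = 1 - (s.card : ℝ) * m := by simp [sprd]
    have hmle : m ≤ sprd x s m x := by
      rw [hsprdx]
      rw [hcardins] at hcard1
      linarith
    have hsprd0 : ∀ v, 0 ≤ sprd x s m v :=
      (isProb_sprd x s m hm hcard_s hxs).1
    have hInsCard : (insert a s).card = I + 1 := Finset.card_insert_of_notMem ha
    refine ⟨fun i => if i ≤ I then ξ i else sprd x (insert a s) m, ⟨?_, ?_, ?_, ?_⟩, ?_⟩
    · show (if 0 ≤ I then ξ 0 else _) = dirac x
      rw [if_pos (Nat.zero_le I), hξ0]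
    · rw [hInsCard]
      show (if I + 1 ≤ I then ξ (I + 1) else _) = sprd x (insert a s) m
      rw [if_neg (by omega)]
    · intro i hi
      rw [hInsCard] at hi
      by_cases hh : i ≤ I
      · show IsProb (if i ≤ I then ξ i else _)
        rw [if_pos hh]
        exact hξprob i hh
      · show IsProb (if i ≤ I then ξ i else sprd x (insert a s) m)
        rw [if_neg hh]
        exact isProb_sprd x (insert a s) m hm hcard1 hxs'
    · intro i hi
      rw [hInsCard] at hi
      by_cases hh : i < I
      · obtain ⟨e', he', hsupp⟩ := hξstep i hh
        refine ⟨e', he', ?_⟩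
        intro v hv
        apply hsupp
        simp only [Function.mem_support] at hv ⊢
        rw [if_pos hh.le, if_pos (Nat.succ_le_of_lt hh)] at hv
        exact hv
      · have hiI : i = I := by omega
        refine ⟨e, he, ?_⟩
        intro v hv
        simp only [Function.mem_support] at hv
        rw [if_pos (le_of_eq hiI), if_neg (by omega : ¬(i + 1 ≤ I)), hiI, hξI] at hv
        by_cases hvx : v = x
        · exact hvx ▸ hxe
        · by_cases hva : v = a
          · exact hva ▸ hae
          · exfalso
            apply hv
            rw [hstep_eq]
            simp [hvx, hva]
    · intro i hi
      rw [hInsCard] at hi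
      show 0 ≤ W1 H (if i ≤ I then ξ i else sprd x (insert a s) m)
            (if i + 1 ≤ I then ξ (i + 1) else sprd x (insert a s) m)
          ∧ W1 H (if i ≤ I then ξ i else sprd x (insert a s) m)
            (if i + 1 ≤ I then ξ (i + 1) else sprd x (insert a s) m) ≤ m
      by_cases hh : i < I
      · have := hξW i hh
        rw [if_pos hh.le, if_pos (Nat.succ_le_of_lt hh)]
        exact this
      · have hiI : i = I := by omega
        rw [if_pos (le_of_eq hiI), if_neg (by omega : ¬(i + 1 ≤ I)), hiI, hξI]
        constructor
        · exact W1_nonneg H _ _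
        · calc W1 H (sprd x s m) (sprd x (insert a s) m)
              ≤ (H.dist x a : ℝ) * m := by
                rw [hstep_eq]
                exact W1_single_move H hsprd0 hax hm hmle
            _ ≤ 1 * m := by
                apply mul_le_mul_of_nonneg_right _ hm
                exact_mod_cast dist_le_one' H he hxe hae
            _ = m := one_mul m

end ORicAux5
noncomputable section ORicAux6

variable {V : Type*}

lemma degree_pos (H : HGraph V) (hconn : H.Connected) (hlf : H.LocallyFinite)
    {x y : V} (hxy : x ≠ y) : 0 < H.degree x := by
  obtain ⟨z, hz⟩ := exists_adj H hconn hxy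
  rw [HGraph.degree]
  exact (Set.ncard_pos (hlf x)).mpr ⟨z, hz⟩

lemma rw_eq_sprd (H : HGraph V) (hlf : H.LocallyFinite) (x : V) (α : ℝ)
    (hd : 0 < H.degree x) :
    rw H α x = sprd x (hlf x).toFinset ((1 - α) / (H.degree x : ℝ)) := by
  have hcard : (hlf x).toFinset.card = H.degree x :=
    (Set.ncard_eq_toFinset_card _ (hlf x)).symm
  have hdne : (H.degree x : ℝ) ≠ 0 := Nat.cast_ne_zero.mpr hd.ne'
  funext v
  by_cases hvx : v = x
  · simp only [rw, sprd, if_pos hvx, hcard]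
    field_simp
    ring
  · by_cases hva : H.Adj x v
    · simp only [rw, sprd, if_neg hvx]
      rw [if_pos hva, if_pos ((hlf x).mem_toFinset.mpr hva)]
    · simp only [rw, sprd, if_neg hvx]
      rw [if_neg hva, if_neg (fun hh => hva ((hlf x).mem_toFinset.mp hh))]

lemma Wh_exists_dirac_rw (H : HGraph V) (hlf : H.LocallyFinite)
    {h : ℝ → ℝ} {D0 D1 : ℝ} (hc : CostFn h D0 D1) {x : V} (hd : 0 < H.degree x)
    {α : ℝ} (hα : α ∈ Set.Icc (0 : ℝ) 1) :
    ∃ c ∈ WhS H h (dirac x) (rw H α x), c ≤ D0 * (1 - α) := by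
  set d : ℝ := (H.degree x : ℝ) with hddef
  have hd1 : (1 : ℝ) ≤ d := by
    rw [hddef]
    exact_mod_cast Nat.one_le_iff_ne_zero.mpr hd.ne'
  have hdne : d ≠ 0 := by linarith
  set m : ℝ := (1 - α) / d with hmdef
  have hm : 0 ≤ m := div_nonneg (by linarith [hα.2]) (by linarith)
  have hcard : (hlf x).toFinset.card = H.degree x :=
    (Set.ncard_eq_toFinset_card _ (hlf x)).symm
  have hcardm : ((hlf x).toFinset.card : ℝ) * m = 1 - α := by
    rw [hcard, hmdef, ← hddef]
    field_simp
  have hm1 : m ≤ 1 := by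
    rw [hmdef, div_le_one (by linarith : (0:ℝ) < d)]
    linarith [hα.1]
  obtain ⟨ξ, hadm, hW⟩ := spread_exists H x m hm (hlf x).toFinset
    (fun v hv => (hlf x).mem_toFinset.mp hv)
    (by rw [hcardm]; linarith [hα.1])
  rw [← rw_eq_sprd H hlf x α hd] at hadm
  set N := (hlf x).toFinset.card with hNdef
  refine ⟨∑ i ∈ Finset.range N, h (W1 H (ξ i) (ξ (i + 1))), ⟨N, ξ, hadm, rfl⟩, ?_⟩
  calc ∑ i ∈ Finset.range N, h (W1 H (ξ i) (ξ (i + 1)))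
      ≤ ∑ _i ∈ Finset.range N, h m := by
        apply Finset.sum_le_sum
        intro i hi
        rw [Finset.mem_range] at hi
        obtain ⟨hW0, hWm⟩ := hW i hi
        exact hc.mono ⟨hW0, le_trans hWm hm1⟩ ⟨hm, hm1⟩ hWm
    _ = (N : ℝ) * h m := by rw [Finset.sum_const, Finset.card_range, nsmul_eq_mul]
    _ ≤ (N : ℝ) * (D0 * m) := by
        apply mul_le_mul_of_nonneg_left (h_le_linear hc ⟨hm, hm1⟩) (Nat.cast_nonneg _)
    _ = D0 * ((N : ℝ) * m) := by ring
    _ = D0 * (1 - α) := by rw [hcardm]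

end ORicAux6

theorem ORic_lower_bound' {V : Type*} (H : HGraph V)
    (hconn : H.Connected) (hlf : H.LocallyFinite) (hsimp : H.Simple)
    (h : ℝ → ℝ) (D0 D1 : ℝ) (hc : CostFn h D0 D1)
    (α : ℝ) (hα : α ∈ Set.Icc (0 : ℝ) 1) (x y : V) (hxy : x ≠ y) :
    -(2 * D0 * (1 - α)) / Wh H h (dirac x) (dirac y) ≤ ORic H h α x y := by
  classical
  have hdx : 0 < H.degree x := degree_pos H hconn hlf hxy
  have hdy : 0 < H.degree y := degree_pos H hconn hlf hxy.symm
  have hSxy : (WhS H h (dirac x) (dirac y)).Nonempty := WhS_dirac_nonempty H h hconn x y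
  obtain ⟨cx, hcx, hcxle⟩ := Wh_exists_dirac_rw H hlf hc hdx hα
  obtain ⟨cy, hcy, hcyle⟩ := Wh_exists_dirac_rw H hlf hc hdy hα
  have hcx' : cx ∈ WhS H h (rw H α x) (dirac x) := WhS_symm hcx
  have hBne : (WhS H h (dirac x) (rw H α y)).Nonempty := by
    obtain ⟨b, hb⟩ := hSxy
    exact ⟨b + cy, WhS_add hb hcy⟩
  have t1 : Wh H h (rw H α x) (rw H α y)
      ≤ Wh H h (rw H α x) (dirac x) + Wh H h (dirac x) (rw H α y) :=
    Wh_triangle hc ⟨cx, hcx'⟩ hBne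
  have t2 : Wh H h (dirac x) (rw H α y)
      ≤ Wh H h (dirac x) (dirac y) + Wh H h (dirac y) (rw H α y) :=
    Wh_triangle hc hSxy ⟨cy, hcy⟩
  have b1 : Wh H h (rw H α x) (dirac x) ≤ D0 * (1 - α) :=
    le_trans (csInf_le (Wh_bddBelow hc _ _) hcx') hcxle
  have b2 : Wh H h (dirac y) (rw H α y) ≤ D0 * (1 - α) :=
    le_trans (csInf_le (Wh_bddBelow hc _ _) hcy) hcyle
  have key : Wh H h (rw H α x) (rw H α y)
      ≤ Wh H h (dirac x) (dirac y) + 2 * D0 * (1 - α) := by linarith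
  have hd0 : 0 ≤ Wh H h (dirac x) (dirac y) := Wh_nonneg hc _ _
  rcases hd0.eq_or_lt with hd | hd
  · unfold ORic
    rw [← hd, div_zero, div_zero]
    norm_num
  · unfold ORic
    have heq : (1 : ℝ) - Wh H h (rw H α x) (rw H α y) / Wh H h (dirac x) (dirac y)
        = (Wh H h (dirac x) (dirac y) - Wh H h (rw H α x) (rw H α y))
          / Wh H h (dirac x) (dirac y) := by
      field_simp
    rw [heq, div_le_div_iff_of_pos_right hd]
    linarith

/-- Lower bound on the `(α,h)`-Ollivier–Ricci curvature. -/
theorem ORic_lower_bound {V : Type*} (H : HGraph V)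
    (hconn : H.Connected) (hlf : H.LocallyFinite) (hsimp : H.Simple)
    (h : ℝ → ℝ) (D0 D1 : ℝ) (hc : CostFn h D0 D1)
    (α : ℝ) (hα : α ∈ Set.Icc (0 : ℝ) 1) (x y : V) (hxy : x ≠ y) :
    -(2 * D0 * (1 - α)) / Wh H h (dirac x) (dirac y) ≤ ORic H h α x y := by
  exact ORic_lower_bound' H hconn hlf hsimp h D0 D1 hc α hα x y hxy
end

section
/- For the line graph (path) with endpoints x and y at distance d(x,y) ≥ 2, W_h(m_x^α, m_y^α) = d(x,y)·h(1) − 2(h(1) − h(α)) for all α ∈ [0,1], and hence the h-LLY–Ricci curvature between the endpoints is κ̃(h;x,y) = 2h'(1)/(d(x,y)·h(1)). -/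
open Filter Set Classical

/-- The path graph on vertices `{0, 1, …, N}`, as a hypergraph whose
hyperedges are the pairs of consecutive vertices. -/
def pathH (N : ℕ) : HGraph (Fin (N + 1)) :=
  ⟨{e | ∃ i : Fin N, e = {i.castSucc, i.succ}}⟩

namespace PathAux

open Finset

lemma isProb_sum {V : Type*} [Fintype V] {μ : V → ℝ} (hμ : IsProb μ) : ∑ v, μ v = 1 := by
  rw [← tsum_fintype (L := .unconditional _)]; exact hμ.2.2

/-- mass above level `j` -/
def G (N j : ℕ) (μ : Fin (N+1) → ℝ) : ℝ :=
  ∑ v : Fin (N+1), if j < (v : ℕ) then μ v else 0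

lemma mem_pathE {N : ℕ} {e : Set (Fin (N+1))} :
    e ∈ (pathH N).E ↔ ∃ i : Fin N, e = {i.castSucc, i.succ} := Iff.rfl

lemma edge_mem {N k : ℕ} (hk : k < N) :
    ({⟨k, by omega⟩, ⟨k+1, by omega⟩} : Set (Fin (N+1))) ∈ (pathH N).E := by
  refine ⟨⟨k, hk⟩, ?_⟩
  simp only [Fin.castSucc, Fin.succ, Fin.castAdd, Fin.castLE]

lemma dist_self {N : ℕ} (x : Fin (N+1)) : (pathH N).dist x x = 0 := by
  apply Nat.sInf_eq_zero.mpr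
  exact Or.inl ⟨fun _ => x, rfl, rfl, fun i hi => absurd hi (Nat.not_lt_zero i)⟩

lemma step_edge {N : ℕ} (hN : 1 ≤ N) (a b : Fin (N+1))
    (hab : (b : ℕ) ≤ (a : ℕ) + 1 ∧ (a : ℕ) ≤ (b : ℕ) + 1) :
    ∃ e ∈ (pathH N).E, a ∈ e ∧ b ∈ e := by
  rcases Nat.lt_or_ge (min (a : ℕ) (b : ℕ)) N with hm | hm
  · refine ⟨_, edge_mem hm, ?_, ?_⟩ <;>
    · simp only [Set.mem_insert_iff, Set.mem_singleton_iff, Fin.ext_iff]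
      omega
  · have ha := a.isLt; have hb := b.isLt
    refine ⟨_, edge_mem (k := N - 1) (by omega), ?_, ?_⟩ <;>
    · simp only [Set.mem_insert_iff, Set.mem_singleton_iff, Fin.ext_iff]
      omega

/-- the walk from `x` down to `0` and then up to `y` -/
def walk {N : ℕ} (x y : Fin (N+1)) (t : ℕ) : Fin (N+1) :=
  if t ≤ (x : ℕ) then ⟨(x : ℕ) - t, by omega⟩
  else ⟨min (t - (x : ℕ)) (y : ℕ), by have := y.isLt; omega⟩

lemma walk_val {N : ℕ} (x y : Fin (N+1)) (t : ℕ) :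
    ((walk x y t : Fin (N+1)) : ℕ) =
      if t ≤ (x : ℕ) then (x : ℕ) - t else min (t - (x : ℕ)) (y : ℕ) := by
  unfold walk; split_ifs <;> rfl

lemma exists_path {N : ℕ} (hN : 1 ≤ N) (x y : Fin (N+1)) :
    ∃ n, (pathH N).IsPath x y n := by
  refine ⟨(x : ℕ) + (y : ℕ), walk x y, ?_, ?_, ?_⟩
  · exact Fin.ext (by rw [walk_val]; split_ifs <;> omega)
  · exact Fin.ext (by rw [walk_val]; split_ifs <;> omega)
  · intro i _
    apply step_edge hN
    rw [walk_val, walk_val]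
    constructor <;> (split_ifs <;> omega)

lemma one_le_dist {N : ℕ} (hN : 1 ≤ N) {x y : Fin (N+1)} (hxy : x ≠ y) :
    1 ≤ (pathH N).dist x y := by
  rw [Nat.one_le_iff_ne_zero]
  intro h0
  rcases Nat.sInf_eq_zero.mp h0 with h | h
  · obtain ⟨f, hf0, hfn, -⟩ := h
    exact hxy (hf0 ▸ hfn ▸ rfl)
  · obtain ⟨n, hn⟩ := exists_path hN x y
    exact (Set.eq_empty_iff_forall_notMem.mp h) n hn

lemma dist_le_one {N : ℕ} {x y : Fin (N+1)} {e : Set (Fin (N+1))}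
    (he : e ∈ (pathH N).E) (hx : x ∈ e) (hy : y ∈ e) : (pathH N).dist x y ≤ 1 := by
  apply Nat.sInf_le
  exact ⟨fun t => if t = 0 then x else y, by simp, by simp, by
    intro i hi
    interval_cases i
    exact ⟨e, he, by simpa using hx, by simpa using hy⟩⟩

end PathAux
namespace PathAux

open Finset

lemma prod_coupling {V : Type*} [Fintype V] {μ ν : V → ℝ} (hμ : IsProb μ) (hν : IsProb ν) :
    IsCoupling (fun x y => μ x * ν y) μ ν := by
  refine ⟨fun x y => mul_nonneg (hμ.1 x) (hν.1 y), fun x => ?_, fun y => ?_⟩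
  · rw [tsum_mul_left, hν.2.2, mul_one]
  · rw [tsum_mul_right, hμ.2.2, one_mul]

lemma W1_set_nonempty {V : Type*} [Fintype V] (H : HGraph V) {μ ν : V → ℝ}
    (hμ : IsProb μ) (hν : IsProb ν) :
    {c | ∃ π, IsCoupling π μ ν ∧
      c = ∑' p : V × V, (H.dist p.1 p.2 : ℝ) * π p.1 p.2}.Nonempty :=
  ⟨_, _, prod_coupling hμ hν, rfl⟩

lemma W1_set_nonneg {V : Type*} (H : HGraph V) {μ ν : V → ℝ} {c : ℝ}
    (hc : c ∈ {c | ∃ π, IsCoupling π μ ν ∧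
      c = ∑' p : V × V, (H.dist p.1 p.2 : ℝ) * π p.1 p.2}) : 0 ≤ c := by
  obtain ⟨π, hπ, rfl⟩ := hc
  exact tsum_nonneg fun p => mul_nonneg (Nat.cast_nonneg _) (hπ.1 _ _)

lemma W1_bddBelow {V : Type*} (H : HGraph V) (μ ν : V → ℝ) :
    BddBelow {c | ∃ π, IsCoupling π μ ν ∧
      c = ∑' p : V × V, (H.dist p.1 p.2 : ℝ) * π p.1 p.2} :=
  ⟨0, fun _ hc => W1_set_nonneg H hc⟩

lemma W1_nonneg {V : Type*} (H : HGraph V) (μ ν : V → ℝ) : 0 ≤ W1 H μ ν :=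
  Real.sInf_nonneg fun _ hc => W1_set_nonneg H hc

/-- moving mass `δ` from `a` to an adjacent `b` costs at most `δ` -/
lemma W1_le_move {N : ℕ} {a b : Fin (N+1)} (hab : a ≠ b)
    (hd : (pathH N).dist a b ≤ 1) {δ : ℝ} (hδ : 0 ≤ δ) {μ : Fin (N+1) → ℝ}
    (hμ0 : ∀ v, 0 ≤ μ v) (hδa : δ ≤ μ a) :
    W1 (pathH N) μ
      (fun v => μ v + (if v = b then δ else 0) - (if v = a then δ else 0)) ≤ δ := by
  classical
  set ν : Fin (N+1) → ℝ :=
    fun v => μ v + (if v = b then δ else 0) - (if v = a then δ else 0) with hν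
  have hνa : ν a = μ a - δ := by simp [hν, hab]
  have hνb : ν b = μ b + δ := by simp [hν, Ne.symm hab]
  have hνo : ∀ v, v ≠ a → v ≠ b → ν v = μ v := by
    intro v hva hvb; simp [hν, hva, hvb]
  set π : Fin (N+1) → Fin (N+1) → ℝ := fun x y =>
    (if x = y then min (μ x) (ν x) else 0) + (if x = a ∧ y = b then δ else 0) with hπdef
  have hπ : IsCoupling π μ ν := by
    refine ⟨fun x y => ?_, fun x => ?_, fun y => ?_⟩
    · have hν0 : ∀ v, 0 ≤ ν v := by
        intro v
        rcases eq_or_ne v a with hva | hva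
        · rw [hva, hνa]; linarith
        · rcases eq_or_ne v b with hvb | hvb
          · rw [hvb, hνb]; linarith [hμ0 b]
          · rw [hνo v hva hvb]; exact hμ0 v
      have h1 : 0 ≤ min (μ x) (ν x) := le_min (hμ0 x) (hν0 x)
      positivity
    · rw [tsum_fintype]
      simp only [hπdef, Finset.sum_add_distrib, Finset.sum_ite_eq, Finset.mem_univ, if_true]
      have : ∀ y : Fin (N+1), (if x = a ∧ y = b then δ else 0) = if y = b then (if x = a then δ else 0) else 0 := by
        intro y; by_cases h1 : x = a <;> by_cases h2 : y = b <;> simp [h1, h2]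
      rw [Finset.sum_congr rfl fun y _ => this y, Finset.sum_ite_eq' Finset.univ b
        (fun _ => if x = a then δ else 0)]
      simp only [Finset.mem_univ, if_true]
      rcases eq_or_ne x a with hxa | hxa
      · rw [hxa, if_pos rfl, hνa, min_eq_right (by linarith)]; ring
      · rw [if_neg hxa, add_zero]
        rcases eq_or_ne x b with hxb | hxb
        · rw [hxb, hνb, min_eq_left (by linarith [hμ0 b])]
        · rw [hνo x hxa hxb, min_self]
    · rw [tsum_fintype]
      simp only [hπdef, Finset.sum_add_distrib]
      have h1 : ∀ x : Fin (N+1), (if x = y then min (μ x) (ν x) else 0)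
          = if x = y then min (μ y) (ν y) else 0 := by
        intro x; by_cases hx : x = y <;> simp [hx]
      rw [Finset.sum_congr rfl fun x _ => h1 x, Finset.sum_ite_eq' Finset.univ y
        (fun _ => min (μ y) (ν y))]
      have h2 : ∀ x : Fin (N+1), (if x = a ∧ y = b then δ else 0) = if x = a then (if y = b then δ else 0) else 0 := by
        intro x; by_cases hx : x = a <;> by_cases hy : y = b <;> simp [hx, hy]
      rw [Finset.sum_congr rfl fun x _ => h2 x, Finset.sum_ite_eq' Finset.univ a
        (fun _ => if y = b then δ else 0)]
      simp only [Finset.mem_univ, if_true]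
      rcases eq_or_ne y a with hya | hya
      · rw [hya, if_neg hab, hνa, min_eq_right (by linarith), add_zero]
      · rcases eq_or_ne y b with hyb | hyb
        · rw [hyb, if_pos rfl, hνb, min_eq_left (by linarith [hμ0 b])]
        · rw [if_neg hyb, hνo y hya hyb, min_self, add_zero]
  have hmem : (∑' p : Fin (N+1) × Fin (N+1), ((pathH N).dist p.1 p.2 : ℝ) * π p.1 p.2)
      ∈ {c | ∃ π, IsCoupling π μ ν ∧
        c = ∑' p : Fin (N+1) × Fin (N+1), ((pathH N).dist p.1 p.2 : ℝ) * π p.1 p.2} :=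
    ⟨π, hπ, rfl⟩
  have hcost : (∑' p : Fin (N+1) × Fin (N+1), ((pathH N).dist p.1 p.2 : ℝ) * π p.1 p.2) ≤ δ := by
    rw [tsum_fintype, Fintype.sum_prod_type]
    have : ∀ x y : Fin (N+1), ((pathH N).dist x y : ℝ) * π x y
        = (if x = y then 0 else 0) + (if x = a ∧ y = b then ((pathH N).dist a b : ℝ) * δ else 0) := by
      intro x y
      simp only [hπdef, mul_add]
      congr 1
      · by_cases hxy : x = y
        · subst hxy; simp [dist_self]
        · simp [hxy]
      · by_cases hxy : x = a ∧ y = b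
        · obtain ⟨rfl, rfl⟩ := hxy; simp
        · simp [hxy]
    simp only [this, Finset.sum_add_distrib, ite_self, Finset.sum_const_zero, zero_add]
    have h2 : ∀ x : Fin (N+1), ∑ y : Fin (N+1), (if x = a ∧ y = b then ((pathH N).dist a b : ℝ) * δ else 0)
        = if x = a then ((pathH N).dist a b : ℝ) * δ else 0 := by
      intro x
      by_cases hx : x = a
      · simp only [hx, true_and]
        rw [Finset.sum_ite_eq' Finset.univ b (fun _ => ((pathH N).dist a b : ℝ) * δ)]
        simp
      · simp [hx]
    rw [Finset.sum_congr rfl fun x _ => h2 x,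
      Finset.sum_ite_eq' Finset.univ a (fun _ => ((pathH N).dist a b : ℝ) * δ)]
    simp only [Finset.mem_univ, if_true]
    calc ((pathH N).dist a b : ℝ) * δ ≤ 1 * δ := by
          apply mul_le_mul_of_nonneg_right _ hδ
          exact_mod_cast hd
      _ = δ := one_mul δ
  exact le_trans (csInf_le (W1_bddBelow _ _ _) hmem) hcost

end PathAux
namespace PathAux

open Finset

lemma G_mem_Icc {N : ℕ} (j : ℕ) {μ : Fin (N+1) → ℝ} (hμ : IsProb μ) :
    G N j μ ∈ Set.Icc (0:ℝ) 1 := by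
  constructor
  · exact Finset.sum_nonneg fun v _ => by split_ifs; exacts [hμ.1 v, le_refl 0]
  · calc G N j μ ≤ ∑ v : Fin (N+1), μ v :=
        Finset.sum_le_sum fun v _ => by split_ifs; exacts [le_refl _, hμ.1 v]
      _ = 1 := isProb_sum hμ

/-- Kantorovich lower bound along the cut at level `j`. -/
lemma W1_ge_cut {N : ℕ} (hN : 1 ≤ N) (j : ℕ) {μ ν : Fin (N+1) → ℝ}
    (hμ : IsProb μ) (hν : IsProb ν) :
    |G N j ν - G N j μ| ≤ W1 (pathH N) μ ν := by
  classical
  apply le_csInf (W1_set_nonempty (pathH N) hμ hν)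
  rintro c ⟨π, hπ, rfl⟩
  set f : Fin (N+1) → ℝ := fun v => if j < (v : ℕ) then 1 else 0 with hf
  have hrow : ∀ x, ∑ y, π x y = μ x := fun x => by
    rw [← tsum_fintype (L := .unconditional _)]; exact hπ.2.1 x
  have hcol : ∀ y, ∑ x, π x y = ν y := fun y => by
    rw [← tsum_fintype (L := .unconditional _)]; exact hπ.2.2 y
  have hGν : G N j ν = ∑ x, ∑ y, f y * π x y := by
    rw [Finset.sum_comm]
    unfold G
    apply Finset.sum_congr rfl
    intro y _
    rw [← Finset.mul_sum, hcol y]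
    by_cases hjy : j < (y : ℕ) <;> simp [hf, hjy]
  have hGμ : G N j μ = ∑ x, ∑ y, f x * π x y := by
    unfold G
    apply Finset.sum_congr rfl
    intro x _
    rw [← Finset.mul_sum, hrow x]
    by_cases hjx : j < (x : ℕ) <;> simp [hf, hjx]
  have hkey : G N j ν - G N j μ = ∑ x, ∑ y, (f y - f x) * π x y := by
    rw [hGν, hGμ, ← Finset.sum_sub_distrib]
    apply Finset.sum_congr rfl
    intro x _
    rw [← Finset.sum_sub_distrib]
    apply Finset.sum_congr rfl
    intro y _
    ring
  rw [hkey, tsum_fintype, Fintype.sum_prod_type]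
  calc |∑ x, ∑ y, (f y - f x) * π x y|
      ≤ ∑ x, |∑ y, (f y - f x) * π x y| := Finset.abs_sum_le_sum_abs _ _
    _ ≤ ∑ x, ∑ y, |(f y - f x) * π x y| :=
        Finset.sum_le_sum fun x _ => Finset.abs_sum_le_sum_abs _ _
    _ ≤ ∑ x, ∑ y, ((pathH N).dist x y : ℝ) * π x y := by
        apply Finset.sum_le_sum; intro x _
        apply Finset.sum_le_sum; intro y _
        rw [abs_mul, abs_of_nonneg (hπ.1 x y)]
        apply mul_le_mul_of_nonneg_right _ (hπ.1 x y)
        rcases eq_or_ne x y with rfl | hxy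
        · simp
        · have h1 : (1 : ℝ) ≤ ((pathH N).dist x y : ℝ) := by
            exact_mod_cast one_le_dist hN hxy
          have h2 : |f y - f x| ≤ 1 := by
            simp only [hf]
            split_ifs <;> norm_num
          linarith

/-- steps supported in an edge away from the cut don't change the cut mass -/
lemma G_step_eq {N : ℕ} {ρ σ : Fin (N+1) → ℝ} (hρ : IsProb ρ) (hσ : IsProb σ)
    {k : Fin N}
    (hsupp : Function.support (fun v => σ v - ρ v) ⊆ ({k.castSucc, k.succ} : Set (Fin (N+1))))
    {j : ℕ} (hj : j ≠ (k : ℕ)) : G N j σ = G N j ρ := by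
  have hd0 : ∀ v : Fin (N+1), (v : ℕ) ≠ (k : ℕ) → (v : ℕ) ≠ (k : ℕ) + 1 → σ v - ρ v = 0 := by
    intro v h1 h2
    by_contra hne
    rcases hsupp hne with hv | hv
    · exact h1 (by rw [hv]; rfl)
    · exact h2 (by rw [Set.mem_singleton_iff] at hv; rw [hv]; rfl)
  rcases Nat.lt_or_ge (k : ℕ) j with hkj | hkj
  · -- all vertices above j are untouched
    unfold G
    apply Finset.sum_congr rfl
    intro v _
    split_ifs with hjv
    · have : σ v - ρ v = 0 := hd0 v (by omega) (by omega)
      linarith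
    · rfl
  · have hjk : j < (k : ℕ) := by omega
    -- all vertices below or at j are untouched; use total mass
    have htot : ∑ v : Fin (N+1), (σ v - ρ v) = 0 := by
      rw [Finset.sum_sub_distrib, isProb_sum hσ, isProb_sum hρ]; ring
    have : G N j σ - G N j ρ = ∑ v : Fin (N+1), (σ v - ρ v) := by
      unfold G
      rw [← Finset.sum_sub_distrib]
      apply Finset.sum_congr rfl
      intro v _
      split_ifs with hjv
      · rfl
      · have hk1 : (k : ℕ) < N := k.isLt
        have : σ v - ρ v = 0 := hd0 v (by omega) (by omega)
        linarith
    rw [htot] at this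
    linarith

/-- an admissible step has `W1` at most 1 -/
lemma step_W1_le_one {N : ℕ} {μ ν : Fin (N+1) → ℝ}
    (hμ : IsProb μ) (hν : IsProb ν) {e : Set (Fin (N+1))} (he : e ∈ (pathH N).E)
    (hsupp : Function.support (fun v => ν v - μ v) ⊆ e) :
    W1 (pathH N) μ ν ≤ 1 := by
  classical
  obtain ⟨k, rfl⟩ := he
  set a := k.castSucc with ha
  set b := k.succ with hb
  have hab : a ≠ b := ne_of_lt (Fin.castSucc_lt_succ (i := k))
  have hd0 : ∀ v : Fin (N+1), v ≠ a → v ≠ b → ν v - μ v = 0 := by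
    intro v h1 h2
    by_contra hne
    rcases hsupp hne with hv | hv
    · exact h1 hv
    · exact h2 hv
  have hba : ν a - μ a = -(ν b - μ b) := by
    have htot : ∑ v : Fin (N+1), (ν v - μ v) = 0 := by
      rw [Finset.sum_sub_distrib, isProb_sum hν, isProb_sum hμ]; ring
    have heq : ∑ v : Fin (N+1), (ν v - μ v) =
        ∑ v : Fin (N+1), ((if v = a then ν a - μ a else 0) + (if v = b then ν b - μ b else 0)) := by
      apply Finset.sum_congr rfl
      intro v _
      by_cases hva : v = a
      · rw [hva, if_pos rfl, if_neg hab]; ring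
      · by_cases hvb : v = b
        · rw [hvb, if_neg (fun hh => hab hh.symm), if_pos rfl]; ring
        · rw [if_neg hva, if_neg hvb, hd0 v hva hvb]; ring
    rw [heq, Finset.sum_add_distrib, Finset.sum_ite_eq' Finset.univ a,
      Finset.sum_ite_eq' Finset.univ b] at htot
    simp only [Finset.mem_univ, if_true] at htot
    linarith
  have hedge : (pathH N).dist a b ≤ 1 :=
    dist_le_one ⟨k, rfl⟩ (Set.mem_insert _ _) (Set.mem_insert_of_mem _ rfl)
  have hedge' : (pathH N).dist b a ≤ 1 :=
    dist_le_one ⟨k, rfl⟩ (Set.mem_insert_of_mem _ rfl) (Set.mem_insert _ _)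
  rcases le_or_gt 0 (ν b - μ b) with hpos | hneg
  · -- mass δ = ν b - μ b moves from a to b
    have hνeq : ν = fun v => μ v + (if v = b then (ν b - μ b) else 0)
        - (if v = a then (ν b - μ b) else 0) := by
      funext v
      rcases eq_or_ne v a with rfl | hva
      · rw [if_neg hab, if_pos rfl]; linarith [hba]
      · rcases eq_or_ne v b with rfl | hvb
        · rw [if_pos rfl, if_neg (by exact fun hh => hab hh.symm)]; ring
        · rw [if_neg hvb, if_neg hva]
          have := hd0 v hva hvb; linarith
    have hδa : ν b - μ b ≤ μ a := by
      have := hν.1 a; linarith [hba]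
    have h1 : W1 (pathH N) μ ν ≤ ν b - μ b := by
      have := W1_le_move hab hedge hpos hμ.1 hδa
      rwa [← hνeq] at this
    have : ν b ≤ 1 := by
      calc ν b ≤ ∑ v : Fin (N+1), ν v :=
          Finset.single_le_sum (fun v _ => hν.1 v) (Finset.mem_univ b)
        _ = 1 := isProb_sum hν
    have := hμ.1 b
    linarith
  · -- mass moves from b to a
    have hνeq : ν = fun v => μ v + (if v = a then (μ b - ν b) else 0)
        - (if v = b then (μ b - ν b) else 0) := by
      funext v
      rcases eq_or_ne v a with rfl | hva
      · rw [if_pos rfl, if_neg hab]; linarith [hba]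
      · rcases eq_or_ne v b with rfl | hvb
        · rw [if_neg (fun hh => hab hh.symm), if_pos rfl]; ring
        · rw [if_neg hvb, if_neg hva]
          have := hd0 v hva hvb; linarith
    have hδb : μ b - ν b ≤ μ b := by
      have := hν.1 b; linarith
    have h1 : W1 (pathH N) μ ν ≤ μ b - ν b := by
      have := W1_le_move (Ne.symm hab) hedge' (by linarith) hμ.1 hδb
      rwa [← hνeq] at this
    have : μ b ≤ 1 := by
      calc μ b ≤ ∑ v : Fin (N+1), μ v :=
          Finset.single_le_sum (fun v _ => hμ.1 v) (Finset.mem_univ b)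
        _ = 1 := isProb_sum hμ
    have := hν.1 b
    linarith

end PathAux
namespace PathAux

open Finset

variable {h : ℝ → ℝ} {D0 D1 : ℝ}

lemma h_ratio (hc : CostFn h D0 D1) {t s : ℝ} (ht : 0 ≤ t) (hts : t ≤ s) (hs : s ≤ 1)
    (hs0 : 0 < s) : (t / s) * h s ≤ h t := by
  have h0m : (0:ℝ) ∈ Set.Icc (0:ℝ) 1 := by norm_num
  have hsm : s ∈ Set.Icc (0:ℝ) 1 := ⟨le_of_lt hs0, hs⟩
  have hw1 : (0:ℝ) ≤ 1 - t / s := by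
    rw [sub_nonneg]
    exact div_le_one_of_le₀ hts (le_of_lt hs0)
  have hw2 : (0:ℝ) ≤ t / s := div_nonneg ht (le_of_lt hs0)
  have := hc.concave.2 h0m hsm hw1 hw2 (by ring)
  simp only [smul_eq_mul, mul_zero, zero_add, hc.zero, mul_zero, zero_add] at this
  rw [div_mul_cancel₀ _ (ne_of_gt hs0)] at this
  linarith

lemma sum_h_ge (hc : CostFn h D0 D1) {ι : Type*} (s : Finset ι) (t : ι → ℝ)
    (ht : ∀ i ∈ s, t i ∈ Set.Icc (0:ℝ) 1) {F : ℝ} (hF : F ∈ Set.Icc (0:ℝ) 1)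
    (hFs : F ≤ ∑ i ∈ s, t i) : h F ≤ ∑ i ∈ s, h (t i) := by
  have hnn : ∀ i ∈ s, 0 ≤ h (t i) := fun i hi => hc.nonneg _ (ht i hi)
  rcases eq_or_lt_of_le hF.1 with hF0 | hF0
  · rw [← hF0, hc.zero]
    exact Finset.sum_nonneg hnn
  have hFnn : 0 ≤ h F := hc.nonneg _ hF
  have key : ∀ i ∈ s, h F * min (t i / F) 1 ≤ h (t i) := by
    intro i hi
    rcases le_or_gt F (t i) with hFt | hFt
    · rw [min_eq_right (by rw [le_div_iff₀ hF0]; linarith)]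
      rw [mul_one]
      exact hc.mono hF (ht i hi) hFt
    · rw [min_eq_left (by rw [div_le_one hF0]; linarith)]
      rw [mul_comm]
      exact h_ratio hc (ht i hi).1 (le_of_lt hFt) hF.2 hF0
  have hmin : 1 ≤ ∑ i ∈ s, min (t i / F) 1 := by
    by_cases hex : ∃ j ∈ s, F ≤ t j
    · obtain ⟨j, hj, hFj⟩ := hex
      have : min (t j / F) 1 = 1 := min_eq_right (by rw [le_div_iff₀ hF0]; linarith)
      calc (1:ℝ) = min (t j / F) 1 := this.symm
        _ ≤ ∑ i ∈ s, min (t i / F) 1 :=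
            Finset.single_le_sum (fun i hi => le_min (div_nonneg (ht i hi).1 (le_of_lt hF0)) zero_le_one) hj
    · push_neg at hex
      have : ∀ i ∈ s, min (t i / F) 1 = t i / F := fun i hi =>
        min_eq_left (by rw [div_le_one hF0]; linarith [hex i hi])
      rw [Finset.sum_congr rfl this, ← Finset.sum_div]
      rw [le_div_iff₀ hF0, one_mul]
      exact hFs
  calc h F = h F * 1 := (mul_one _).symm
    _ ≤ h F * ∑ i ∈ s, min (t i / F) 1 := mul_le_mul_of_nonneg_left hmin hFnn
    _ = ∑ i ∈ s, h F * min (t i / F) 1 := Finset.mul_sum _ _ _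
    _ ≤ ∑ i ∈ s, h (t i) := Finset.sum_le_sum key

/-- the fundamental lower bound on transport costs in terms of cut masses -/
lemma cost_lower {N : ℕ} (hN : 1 ≤ N) (hc : CostFn h D0 D1) {μ ν : Fin (N+1) → ℝ}
    {I : ℕ} {ξ : ℕ → Fin (N+1) → ℝ} (hadm : WhAdmissible (pathH N) μ ν I ξ) :
    ∑ j : Fin N, h |G N j ν - G N j μ| ≤
      ∑ i ∈ Finset.range I, h (W1 (pathH N) (ξ i) (ξ (i+1))) := by
  classical
  obtain ⟨hξ0, hξI, hprob, hstep⟩ := hadm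
  have hkex : ∀ i : ℕ, ∃ k : Fin N, i < I →
      Function.support (fun v => ξ (i+1) v - ξ i v) ⊆ ({k.castSucc, k.succ} : Set (Fin (N+1))) := by
    intro i
    by_cases hi : i < I
    · obtain ⟨e, he, hsupp⟩ := hstep i hi
      obtain ⟨k, rfl⟩ := he
      exact ⟨k, fun _ => hsupp⟩
    · exact ⟨⟨0, hN⟩, fun hcon => absurd hcon hi⟩
  choose k hk using hkex
  set t : ℕ → ℝ := fun i => W1 (pathH N) (ξ i) (ξ (i+1)) with htdef
  have ht : ∀ i < I, t i ∈ Set.Icc (0:ℝ) 1 := by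
    intro i hi
    refine ⟨W1_nonneg _ _ _, ?_⟩
    obtain ⟨e, he, hsupp⟩ := hstep i hi
    exact step_W1_le_one (hprob i (le_of_lt hi)) (hprob (i+1) hi) he hsupp
  -- per-cut estimate
  have hcut : ∀ j : Fin N, |G N j ν - G N j μ| ≤
      ∑ i ∈ (Finset.range I).filter (fun i => k i = j), t i := by
    intro j
    have htele : G N (j : ℕ) ν - G N (j : ℕ) μ =
        ∑ i ∈ Finset.range I, (G N (j : ℕ) (ξ (i+1)) - G N (j : ℕ) (ξ i)) := by
      rw [Finset.sum_range_sub (fun i => G N (j : ℕ) (ξ i)) I, hξ0, hξI]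
    have hfil : ∑ i ∈ Finset.range I, (G N (j : ℕ) (ξ (i+1)) - G N (j : ℕ) (ξ i)) =
        ∑ i ∈ (Finset.range I).filter (fun i => k i = j),
          (G N (j : ℕ) (ξ (i+1)) - G N (j : ℕ) (ξ i)) := by
      symm
      apply Finset.sum_filter_of_ne
      intro i hi hne
      by_contra hkij
      apply hne
      rw [G_step_eq (hprob i (le_of_lt (Finset.mem_range.mp hi)))
        (hprob (i+1) (Finset.mem_range.mp hi)) (hk i (Finset.mem_range.mp hi))
        (fun hh => hkij (Fin.ext hh).symm)]
      ring
    calc |G N (j : ℕ) ν - G N (j : ℕ) μ|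
        = |∑ i ∈ (Finset.range I).filter (fun i => k i = j),
            (G N (j : ℕ) (ξ (i+1)) - G N (j : ℕ) (ξ i))| := by rw [htele, hfil]
      _ ≤ ∑ i ∈ (Finset.range I).filter (fun i => k i = j),
            |G N (j : ℕ) (ξ (i+1)) - G N (j : ℕ) (ξ i)| := Finset.abs_sum_le_sum_abs _ _
      _ ≤ ∑ i ∈ (Finset.range I).filter (fun i => k i = j), t i := by
          apply Finset.sum_le_sum
          intro i hi
          have hiI : i < I := Finset.mem_range.mp (Finset.mem_filter.mp hi).1
          exact W1_ge_cut hN (j : ℕ) (hprob i (le_of_lt hiI)) (hprob (i+1) hiI)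
  have hsum : ∀ j : Fin N, h |G N j ν - G N j μ| ≤
      ∑ i ∈ (Finset.range I).filter (fun i => k i = j), h (t i) := by
    intro j
    apply sum_h_ge hc _ _ _ _ (hcut j)
    · intro i hi
      exact ht i (Finset.mem_range.mp (Finset.mem_filter.mp hi).1)
    · have hμp : IsProb μ := hξ0 ▸ hprob 0 (Nat.zero_le I)
      have hνp : IsProb ν := hξI ▸ hprob I (le_refl I)
      have h1 := G_mem_Icc (N := N) (j : ℕ) hμp
      have h2 := G_mem_Icc (N := N) (j : ℕ) hνp
      constructor
      · exact abs_nonneg _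
      · rw [abs_sub_le_iff]
        constructor <;> [linarith [h1.1, h2.2]; linarith [h1.2, h2.1]]
  calc ∑ j : Fin N, h |G N j ν - G N j μ|
      ≤ ∑ j : Fin N, ∑ i ∈ (Finset.range I).filter (fun i => k i = j), h (t i) :=
        Finset.sum_le_sum fun j _ => hsum j
    _ = ∑ i ∈ Finset.range I, h (t i) := Finset.sum_fiberwise _ _ _

end PathAux
namespace PathAux

open Finset

lemma sum_ind' {M : ℕ} (a : ℕ) (ha : a < M) (c : ℝ) :
    ∑ v : Fin M, (if (v : ℕ) = a then c else 0) = c := by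
  have key : ∀ v : Fin M, (if (v : ℕ) = a then c else 0) = if v = ⟨a, ha⟩ then c else 0 := by
    intro v
    by_cases hv : (v : ℕ) = a
    · rw [if_pos hv, if_pos (Fin.ext hv)]
    · rw [if_neg hv, if_neg (fun hh => hv (by rw [hh]))]
  rw [Finset.sum_congr rfl fun v _ => key v,
    Finset.sum_ite_eq' Finset.univ (⟨a, ha⟩ : Fin M) fun _ => c]
  simp

lemma sum_two {M : ℕ} (a b : ℕ) (ha : a < M) (hb : b < M) (hab : a ≠ b) (c d : ℝ) :
    ∑ v : Fin M, (if (v : ℕ) = a then c else if (v : ℕ) = b then d else 0) = c + d := by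
  have key : ∀ v : Fin M, (if (v : ℕ) = a then c else if (v : ℕ) = b then d else 0)
      = (if (v : ℕ) = a then c else 0) + (if (v : ℕ) = b then d else 0) := by
    intro v
    split_ifs <;> first | (exfalso; omega) | contradiction | ring
  rw [Finset.sum_congr rfl fun v _ => key v, Finset.sum_add_distrib,
    sum_ind' a ha c, sum_ind' b hb d]

lemma adj_zero {N : ℕ} (hN : 1 ≤ N) (v : Fin (N+1)) :
    (pathH N).Adj 0 v ↔ v = ⟨1, by omega⟩ := by
  constructor
  · rintro ⟨hne, e, ⟨i, rfl⟩, h0e, hve⟩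
    have hi0 : (i : ℕ) = 0 := by
      rcases h0e with h | h
      · have := congrArg Fin.val h; simpa using this.symm
      · have := congrArg Fin.val h
        simp [Fin.val_succ] at this
    rcases hve with h | h
    · exfalso; apply hne
      rw [h, Fin.ext_iff]
      simp [hi0]
    · rw [h, Fin.ext_iff]
      simp [Fin.val_succ, hi0]
  · rintro rfl
    refine ⟨Fin.ne_of_val_ne (by simp), _, edge_mem (k := 0) (by omega), ?_, ?_⟩
    · left; exact Fin.ext (by simp)
    · right; rw [Set.mem_singleton_iff]

lemma adj_last {N : ℕ} (hN : 1 ≤ N) (v : Fin (N+1)) :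
    (pathH N).Adj (Fin.last N) v ↔ v = ⟨N-1, by omega⟩ := by
  constructor
  · rintro ⟨hne, e, ⟨i, rfl⟩, h0e, hve⟩
    have hi0 : (i : ℕ) = N - 1 := by
      rcases h0e with h | h
      · have := congrArg Fin.val h
        have hi := i.isLt
        simp [Fin.val_last] at this
        omega
      · have := congrArg Fin.val h
        have hi := i.isLt
        simp [Fin.val_last, Fin.val_succ] at this
        omega
    rcases hve with h | h
    · rw [h, Fin.ext_iff]
      simpa using hi0
    · exfalso; apply hne
      rw [h, Fin.ext_iff]
      have hi := i.isLt
      simp [Fin.val_last, Fin.val_succ]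
      omega
  · rintro rfl
    have h1 : N - 1 < N := by omega
    refine ⟨Fin.ne_of_val_ne (by simp [Fin.val_last]; omega), _, edge_mem (k := N-1) h1, ?_, ?_⟩
    · right; rw [Set.mem_singleton_iff]
      exact Fin.ext (by simp [Fin.val_last]; omega)
    · left; exact Fin.ext rfl

lemma degree_zero {N : ℕ} (hN : 1 ≤ N) : (pathH N).degree 0 = 1 := by
  unfold HGraph.degree
  have : {y | (pathH N).Adj 0 y} = {(⟨1, by omega⟩ : Fin (N+1))} := by
    ext y; simp only [Set.mem_setOf_eq, Set.mem_singleton_iff]; exact adj_zero hN y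
  rw [this, Set.ncard_singleton]

lemma degree_last {N : ℕ} (hN : 1 ≤ N) : (pathH N).degree (Fin.last N) = 1 := by
  unfold HGraph.degree
  have : {y | (pathH N).Adj (Fin.last N) y} = {(⟨N-1, by omega⟩ : Fin (N+1))} := by
    ext y; simp only [Set.mem_setOf_eq, Set.mem_singleton_iff]; exact adj_last hN y
  rw [this, Set.ncard_singleton]

lemma rw_zero {N : ℕ} (hN : 1 ≤ N) (α : ℝ) :
    rw (pathH N) α 0 =
      fun v : Fin (N+1) => if (v : ℕ) = 0 then α else if (v : ℕ) = 1 then 1-α else 0 := by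
  funext v
  unfold _root_.rw
  rw [degree_zero hN]
  by_cases h0 : v = 0
  · rw [if_pos h0, if_pos (show (v : ℕ) = 0 by rw [h0]; simp)]
  · have h0' : ¬(v : ℕ) = 0 := fun hh => h0 (Fin.ext (by simpa using hh))
    rw [if_neg h0]
    by_cases h1 : (v : ℕ) = 1
    · rw [if_pos ((adj_zero hN v).mpr (Fin.ext (by simpa using h1))), if_neg h0', if_pos h1]
      simp
    · rw [if_neg (fun hadj => h1 (by rw [(adj_zero hN v).mp hadj])), if_neg h0', if_neg h1]

lemma rw_last {N : ℕ} (hN : 1 ≤ N) (α : ℝ) :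
    rw (pathH N) α (Fin.last N) =
      fun v : Fin (N+1) => if (v : ℕ) = N then α else if (v : ℕ) = N-1 then 1-α else 0 := by
  funext v
  unfold _root_.rw
  rw [degree_last hN]
  by_cases h0 : v = Fin.last N
  · rw [if_pos h0, if_pos (show (v : ℕ) = N by rw [h0]; simp [Fin.val_last])]
  · have h0' : ¬(v : ℕ) = N := fun hh => h0 (Fin.ext (by simpa [Fin.val_last] using hh))
    rw [if_neg h0]
    by_cases h1 : (v : ℕ) = N - 1
    · rw [if_pos ((adj_last hN v).mpr (Fin.ext (by simpa using h1))), if_neg h0', if_pos h1]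
      simp
    · rw [if_neg (fun hadj => h1 (by rw [(adj_last hN v).mp hadj])), if_neg h0', if_neg h1]

lemma G_mu_val {N : ℕ} (hN : 1 ≤ N) (α : ℝ) (j : ℕ) :
    G N j (fun v : Fin (N+1) => if (v : ℕ) = 0 then α else if (v : ℕ) = 1 then 1-α else 0)
      = if j = 0 then 1-α else 0 := by
  unfold G
  by_cases hj : j = 0
  · subst hj
    rw [if_pos rfl]
    refine Eq.trans (Finset.sum_congr rfl fun v _ => ?_)
      (sum_ind' (M := N+1) 1 (by omega) (1-α))
    show (if 0 < (v : ℕ) then (if (v : ℕ) = 0 then α else if (v : ℕ) = 1 then 1-α else 0) else 0)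
      = if (v : ℕ) = 1 then 1-α else 0
    split_ifs <;> first | rfl | (exfalso; omega)
  · rw [if_neg hj]
    apply Finset.sum_eq_zero
    intro v _
    show (if j < (v : ℕ) then (if (v : ℕ) = 0 then α else if (v : ℕ) = 1 then 1-α else 0) else 0) = 0
    split_ifs <;> first | rfl | (exfalso; omega)

lemma G_nu_val {N : ℕ} (hN : 1 ≤ N) (α : ℝ) (j : ℕ) (hjN : j < N) :
    G N j (fun v : Fin (N+1) => if (v : ℕ) = N then α else if (v : ℕ) = N-1 then 1-α else 0)
      = if j = N-1 then α else 1 := by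
  unfold G
  by_cases hj : j = N-1
  · subst hj
    rw [if_pos rfl]
    refine Eq.trans (Finset.sum_congr rfl fun v _ => ?_)
      (sum_ind' (M := N+1) N (by omega) α)
    show (if N-1 < (v : ℕ) then (if (v : ℕ) = N then α else if (v : ℕ) = N-1 then 1-α else 0) else 0)
      = if (v : ℕ) = N then α else 0
    split_ifs <;> first | rfl | (exfalso; omega)
  · rw [if_neg hj]
    have htrans : ∀ v : Fin (N+1),
        (if j < (v : ℕ) then (if (v : ℕ) = N then α else if (v : ℕ) = N-1 then 1-α else 0) else 0)
        = if (v : ℕ) = N then α else if (v : ℕ) = N-1 then 1-α else 0 := by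
      intro v
      have := v.isLt
      split_ifs <;> first | rfl | (exfalso; omega)
    refine Eq.trans (Finset.sum_congr rfl fun v _ => htrans v) ?_
    rw [sum_two (M := N+1) N (N-1) (by omega) (by omega) (by omega) α (1-α)]
    ring

lemma F_val {N : ℕ} (hN : 2 ≤ N) {α : ℝ} (hα0 : 0 ≤ α) (j : Fin N) :
    |G N (j : ℕ) (fun v : Fin (N+1) => if (v : ℕ) = N then α else if (v : ℕ) = N-1 then 1-α else 0)
      - G N (j : ℕ) (fun v : Fin (N+1) => if (v : ℕ) = 0 then α else if (v : ℕ) = 1 then 1-α else 0)|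
      = if (j : ℕ) = 0 then α else if (j : ℕ) = N-1 then α else 1 := by
  rw [G_mu_val (by omega) α (j : ℕ), G_nu_val (by omega) α (j : ℕ) j.isLt]
  have hjlt := j.isLt
  split_ifs <;>
    first
      | (exfalso; omega)
      | (rw [sub_zero, abs_of_nonneg hα0])
      | (rw [show (1 : ℝ) - (1 - α) = α by ring, abs_of_nonneg hα0])
      | norm_num

end PathAux
namespace PathAux

open Finset

variable {h : ℝ → ℝ} {D0 D1 : ℝ}

lemma fin_ite_eq {M : ℕ} (a : ℕ) (ha : a < M) (c : ℝ) (v : Fin M) :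
    (if (v : ℕ) = a then c else 0) = (if v = ⟨a, ha⟩ then c else 0) := by
  by_cases hh : (v : ℕ) = a
  · rw [if_pos hh, if_pos (Fin.ext hh)]
  · rw [if_neg hh, if_neg (fun hc' => hh (by rw [hc']))]

lemma W1_step_le {N : ℕ} {i : ℕ} (hi : i < N) {δ : ℝ} (hδ : 0 ≤ δ)
    {μ : Fin (N+1) → ℝ} (hμ0 : ∀ v, 0 ≤ μ v) {ν : Fin (N+1) → ℝ}
    (hν : ∀ v : Fin (N+1),
      ν v = μ v + (if (v : ℕ) = i+1 then δ else 0) - (if (v : ℕ) = i then δ else 0))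
    (hδa : δ ≤ μ ⟨i, by omega⟩) : W1 (pathH N) μ ν ≤ δ := by
  have hab : (⟨i, by omega⟩ : Fin (N+1)) ≠ ⟨i+1, by omega⟩ :=
    Fin.ne_of_val_ne (show i ≠ i + 1 by omega)
  have hd : (pathH N).dist (⟨i, by omega⟩ : Fin (N+1)) ⟨i+1, by omega⟩ ≤ 1 :=
    dist_le_one (edge_mem hi) (Set.mem_insert _ _) (Set.mem_insert_of_mem _ rfl)
  have hνeq : ν = fun v => μ v + (if v = (⟨i+1, by omega⟩ : Fin (N+1)) then δ else 0)
      - (if v = (⟨i, by omega⟩ : Fin (N+1)) then δ else 0) := by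
    funext v
    rw [hν v, fin_ite_eq (i+1) (by omega) δ v, fin_ite_eq i (by omega) δ v]
  rw [hνeq]
  exact W1_le_move hab hd hδ hμ0 hδa

lemma Wh_set_nonneg {N : ℕ} (hc : CostFn h D0 D1) {μ ν : Fin (N+1) → ℝ} :
    ∀ c ∈ {c | ∃ I ξ, WhAdmissible (pathH N) μ ν I ξ ∧
      c = ∑ i ∈ Finset.range I, h (W1 (pathH N) (ξ i) (ξ (i+1)))}, 0 ≤ c := by
  rintro c ⟨I, ξ, hadm, rfl⟩
  apply Finset.sum_nonneg
  intro i hi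
  have hiI := Finset.mem_range.mp hi
  obtain ⟨e, he, hsupp⟩ := hadm.2.2.2 i hiI
  apply hc.nonneg
  exact ⟨W1_nonneg _ _ _,
    step_W1_le_one (hadm.2.2.1 i (le_of_lt hiI)) (hadm.2.2.1 (i+1) hiI) he hsupp⟩

lemma Wh_bddBelow {N : ℕ} (hc : CostFn h D0 D1) (μ ν : Fin (N+1) → ℝ) :
    BddBelow {c | ∃ I ξ, WhAdmissible (pathH N) μ ν I ξ ∧
      c = ∑ i ∈ Finset.range I, h (W1 (pathH N) (ξ i) (ξ (i+1)))} :=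
  ⟨0, fun c hc' => Wh_set_nonneg hc c hc'⟩

set_option maxHeartbeats 2000000 in
/-- Main computation: the `Wh` distance between the two lazy random walks. -/
lemma Wh_rw_eq {N : ℕ} (hN : 2 ≤ N) (hc : CostFn h D0 D1) {α : ℝ}
    (hα0 : 0 ≤ α) (hα1 : α ≤ 1) :
    Wh (pathH N) h (rw (pathH N) α 0) (rw (pathH N) α (Fin.last N)) =
      (N : ℝ) * h 1 - 2 * (h 1 - h α) := by
  classical
  have h1N : 1 ≤ N := by omega
  unfold Wh
  rw [rw_zero h1N α, rw_last h1N α]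
  set μα : Fin (N+1) → ℝ :=
    fun v => if (v : ℕ) = 0 then α else if (v : ℕ) = 1 then 1-α else 0 with hμdef
  set να : Fin (N+1) → ℝ :=
    fun v => if (v : ℕ) = N then α else if (v : ℕ) = N-1 then 1-α else 0 with hνdef
  set ξ : ℕ → Fin (N+1) → ℝ := fun i v =>
    if i = 0 then μα v
    else if i < N then (if (v : ℕ) = i then 1 else 0)
    else να v with hξdef
  have hξ0 : ξ 0 = μα := by
    funext v; simp only [hξdef, if_pos rfl]
  have hξN : ξ N = να := by
    funext v; simp only [hξdef]
    rw [if_neg (by omega), if_neg (by omega)]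
  have hμprob : IsProb μα := by
    refine ⟨?_, Set.toFinite _, ?_⟩
    · intro v; simp only [hμdef]
      split_ifs <;> first | linarith | norm_num
    · rw [tsum_fintype]
      simp only [hμdef]
      rw [sum_two (M := N+1) 0 1 (by omega) (by omega) (by omega) α (1-α)]
      ring
  have hνprob : IsProb να := by
    refine ⟨?_, Set.toFinite _, ?_⟩
    · intro v; simp only [hνdef]
      split_ifs <;> first | linarith | norm_num
    · rw [tsum_fintype]
      simp only [hνdef]
      rw [sum_two (M := N+1) N (N-1) (by omega) (by omega) (by omega) α (1-α)]
      ring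
  have hindprob : ∀ a : ℕ, a < N+1 → IsProb (fun v : Fin (N+1) => if (v:ℕ) = a then (1:ℝ) else 0) := by
    intro a ha
    refine ⟨?_, Set.toFinite _, ?_⟩
    · intro v; dsimp only; split_ifs <;> norm_num
    · rw [tsum_fintype, sum_ind' a ha 1]
  have hprob : ∀ i ≤ N, IsProb (ξ i) := by
    intro i hi
    by_cases hi0 : i = 0
    · subst hi0; rw [hξ0]; exact hμprob
    · by_cases hiN : i < N
      · have : ξ i = fun v : Fin (N+1) => if (v:ℕ) = i then (1:ℝ) else 0 := by
          funext v; simp only [hξdef]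
          rw [if_neg hi0, if_pos hiN]
        rw [this]; exact hindprob i (by omega)
      · have hiN' : i = N := by omega
        subst hiN'; rw [hξN]; exact hνprob
  have hstep : ∀ i < N, ∃ e ∈ (pathH N).E,
      Function.support (fun v => ξ (i+1) v - ξ i v) ⊆ e := by
    intro i hi
    refine ⟨_, edge_mem (k := i) hi, ?_⟩
    intro v hv
    simp only [Function.mem_support] at hv
    simp only [Set.mem_insert_iff, Set.mem_singleton_iff]
    by_contra hcon
    push_neg at hcon
    obtain ⟨hv1, hv2⟩ := hcon
    have hv1' : ¬(v : ℕ) = i := fun hh => hv1 (Fin.ext hh)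
    have hv2' : ¬(v : ℕ) = i+1 := fun hh => hv2 (Fin.ext hh)
    apply hv
    simp only [hξdef, hμdef, hνdef]
    split_ifs <;> first | (exfalso; omega) | contradiction | ring
  have hW1 : ∀ i < N, W1 (pathH N) (ξ i) (ξ (i+1)) ≤ (if i = 0 ∨ i = N-1 then α else 1) := by
    intro i hi
    have hδnn : (0:ℝ) ≤ (if i = 0 ∨ i = N-1 then α else 1) := by
      split_ifs <;> first | exact hα0 | norm_num
    refine W1_step_le hi hδnn (hprob i (le_of_lt hi)).1 ?_ ?_
    · intro v
      simp only [hξdef, hμdef, hνdef]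
      split_ifs <;> first | (exfalso; omega) | contradiction | ring
    · simp only [hξdef, hμdef, hνdef]
      split_ifs <;> first | (exfalso; omega) | contradiction | linarith | norm_num
  -- the cost of the explicit admissible sequence is in the defining set
  have hmem : (∑ i ∈ Finset.range N, h (W1 (pathH N) (ξ i) (ξ (i+1)))) ∈
      {c | ∃ I ξ', WhAdmissible (pathH N) μα να I ξ' ∧
        c = ∑ i ∈ Finset.range I, h (W1 (pathH N) (ξ' i) (ξ' (i+1)))} :=
    ⟨N, ξ, ⟨hξ0, hξN, hprob, hstep⟩, rfl⟩
  -- the sum over cuts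
  have hrange : ∑ i ∈ Finset.range N, (if i = 0 ∨ i = N-1 then h α else h 1)
      = (N:ℝ) * h 1 - 2 * (h 1 - h α) := by
    have hpt : ∀ i ∈ Finset.range N, (if i = 0 ∨ i = N-1 then h α else h 1)
        = h 1 + ((if i = 0 then h α - h 1 else 0) + (if i = N-1 then h α - h 1 else 0)) := by
      intro i hi
      have := Finset.mem_range.mp hi
      split_ifs <;> first | (exfalso; omega) | contradiction | ring
    rw [Finset.sum_congr rfl hpt, Finset.sum_add_distrib, Finset.sum_add_distrib,
      Finset.sum_const, Finset.card_range,
      Finset.sum_ite_eq' (Finset.range N) 0 (fun _ => h α - h 1),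
      Finset.sum_ite_eq' (Finset.range N) (N-1) (fun _ => h α - h 1),
      if_pos (Finset.mem_range.mpr (by omega)), if_pos (Finset.mem_range.mpr (by omega)),
      nsmul_eq_mul]
    ring
  have hcost : ∑ i ∈ Finset.range N, h (W1 (pathH N) (ξ i) (ξ (i+1)))
      ≤ (N:ℝ) * h 1 - 2 * (h 1 - h α) := by
    rw [← hrange]
    apply Finset.sum_le_sum
    intro i hi
    have hiN := Finset.mem_range.mp hi
    have hWle := hW1 i hiN
    have hW0 : 0 ≤ W1 (pathH N) (ξ i) (ξ (i+1)) := W1_nonneg _ _ _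
    by_cases hcase : i = 0 ∨ i = N-1
    · rw [if_pos hcase] at hWle ⊢
      exact hc.mono ⟨hW0, by linarith⟩ ⟨hα0, hα1⟩ hWle
    · rw [if_neg hcase] at hWle ⊢
      exact hc.mono ⟨hW0, hWle⟩ ⟨by norm_num, le_refl 1⟩ hWle
  have hFsum : ∑ j : Fin N, h |G N (j : ℕ) να - G N (j : ℕ) μα|
      = (N:ℝ) * h 1 - 2 * (h 1 - h α) := by
    calc ∑ j : Fin N, h |G N (j : ℕ) να - G N (j : ℕ) μα|
        = ∑ j : Fin N, h (if (j : ℕ) = 0 then α else if (j : ℕ) = N-1 then α else 1) := by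
          apply Finset.sum_congr rfl
          intro j _
          rw [hμdef, hνdef, F_val hN hα0 j]
      _ = ∑ j : Fin N, (h 1 + ((if (j : ℕ) = 0 then h α - h 1 else 0)
            + (if (j : ℕ) = N-1 then h α - h 1 else 0))) := by
          apply Finset.sum_congr rfl
          intro j _
          have := j.isLt
          split_ifs <;> first | (exfalso; omega) | contradiction | ring
      _ = (N:ℝ) * h 1 - 2 * (h 1 - h α) := by
          rw [Finset.sum_add_distrib, Finset.sum_add_distrib, Finset.sum_const,
            sum_ind' (M := N) 0 (by omega) (h α - h 1),
            sum_ind' (M := N) (N-1) (by omega) (h α - h 1),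
            Finset.card_univ, Fintype.card_fin, nsmul_eq_mul]
          ring
  apply le_antisymm
  · exact le_trans (csInf_le (Wh_bddBelow hc μα να) hmem) hcost
  · apply le_csInf ⟨_, hmem⟩
    rintro c ⟨I, ξ', hadm, rfl⟩
    rw [← hFsum]
    exact cost_lower h1N hc hadm

lemma rw_one {V : Type*} (H : HGraph V) (x : V) : rw H 1 x = dirac x := by
  funext v
  unfold _root_.rw dirac
  split_ifs <;> norm_num

end PathAux
namespace PathAux

open Finset Filter Set

variable {h : ℝ → ℝ} {D0 D1 : ℝ}

lemma h_one_pos (hc : CostFn h D0 D1) : 0 < h 1 := by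
  have hev : ∀ᶠ t in nhdsWithin (0:ℝ) (Set.Ioi 0), D0/2 < h t / t :=
    (tendsto_order.1 hc.d0).1 _ (by linarith [hc.d0_pos])
  have hev2 : ∀ᶠ t in nhdsWithin (0:ℝ) (Set.Ioi 0), t < 1 :=
    eventually_nhdsWithin_of_eventually_nhds
      (Filter.Tendsto.eventually_lt_const (by norm_num) tendsto_id)
  have hev3 : ∀ᶠ t in nhdsWithin (0:ℝ) (Set.Ioi 0), t ∈ Set.Ioi (0:ℝ) :=
    eventually_mem_nhdsWithin
  obtain ⟨t, ht1, ht2, ht3⟩ := (hev.and (hev2.and hev3)).exists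
  have ht0 : 0 < t := ht3
  have hht : 0 < h t := by
    have : 0 < h t / t := lt_trans (by linarith [hc.d0_pos]) ht1
    have := mul_pos this ht0
    rwa [div_mul_cancel₀ _ (ne_of_gt ht0)] at this
  have : h t ≤ h 1 := hc.mono ⟨le_of_lt ht0, le_of_lt ht2⟩ ⟨by norm_num, le_refl 1⟩ (le_of_lt ht2)
  linarith

end PathAux
/-- Transport distance between lazy random walks at the two endpoints of the
path graph, and the resulting `h`-LLY–Ricci curvature. -/
theorem curvature_path_graph (N : ℕ) (hN : 2 ≤ N)
    (h : ℝ → ℝ) (D0 D1 : ℝ) (hc : CostFn h D0 D1) :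
    (∀ α ∈ Set.Icc (0 : ℝ) 1,
      Wh (pathH N) h (rw (pathH N) α 0) (rw (pathH N) α (Fin.last N)) =
        (N : ℝ) * h 1 - 2 * (h 1 - h α)) ∧
    hLLY (pathH N) h 0 (Fin.last N) = 2 * D1 / ((N : ℝ) * h 1) := by
  constructor
  · intro α hα
    exact PathAux.Wh_rw_eq hN hc hα.1 hα.2
  · have h1pos : 0 < h 1 := PathAux.h_one_pos hc
    have hNpos : (0:ℝ) < (N : ℝ) := by exact_mod_cast (by omega : 0 < N)
    have hNh : (N : ℝ) * h 1 ≠ 0 := ne_of_gt (mul_pos hNpos h1pos)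
    have hdir : Wh (pathH N) h (dirac (0 : Fin (N+1))) (dirac (Fin.last N)) = (N:ℝ) * h 1 := by
      rw [← PathAux.rw_one (pathH N) (0 : Fin (N+1)), ← PathAux.rw_one (pathH N) (Fin.last N),
        PathAux.Wh_rw_eq hN hc (by norm_num : (0:ℝ) ≤ 1) (le_refl (1:ℝ))]
      ring
    unfold hLLY
    have hIoo : Set.Ioo (0:ℝ) 1 ∈ nhdsWithin (1:ℝ) (Set.Iio 1) := by
      rw [← Set.Ioi_inter_Iio]
      exact Filter.inter_mem (mem_nhdsWithin_of_mem_nhds (Ioi_mem_nhds one_pos))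
        self_mem_nhdsWithin
    have heve : (fun α => ORic (pathH N) h α 0 (Fin.last N) / (1 - α)) =ᶠ[nhdsWithin (1:ℝ) (Set.Iio 1)]
        (fun α => (2 / ((N:ℝ) * h 1)) * ((h 1 - h α) / (1 - α))) := by
      filter_upwards [hIoo] with α hα
      unfold ORic
      rw [hdir, PathAux.Wh_rw_eq hN hc (le_of_lt hα.1) (le_of_lt hα.2)]
      have h1α : (1:ℝ) - α ≠ 0 := ne_of_gt (by linarith [hα.2])
      field_simp
      try ring
    rw [Filter.liminf_congr heve]
    have htend : Filter.Tendsto (fun α => (2 / ((N:ℝ) * h 1)) * ((h 1 - h α) / (1 - α)))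
        (nhdsWithin (1:ℝ) (Set.Iio 1)) (nhds ((2 / ((N:ℝ) * h 1)) * D1)) :=
      hc.d1.const_mul _
    rw [htend.liminf_eq]
    field_simp
end
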